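/- The subgroup of the symmetric group on the 48 facelets generated by the twelve restricted permutations u_e, l_e, f_e, r_e, b_e, d_e (acting on edge facelets and fixing corner facelets) and u_c, l_c, f_c, r_c, b_c, d_c (acting on corner facelets and fixing edge facelets) is the internal direct product of the edge group and the corner group, it has order exactly twice the order of the Rubik's cube group, and the Rubik's cube group is a subgroup of index 2 in it. -/

import Mathlib

set_option maxRecDepth 2000000
set_option maxHeartbeats 4000000


open Equiv

def Umove : Perm (Fin 48) :=
  c[0, 1, 3, 7] * c[5, 10, 16, 21] * c[24, 25, 28, 35] * c[26, 30, 37, 44] * c[32, 39, 45, 43]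

def Lmove : Perm (Fin 48) :=
  c[5, 11, 19, 2] * c[7, 14, 13, 18] * c[30, 39, 46, 27] * c[24, 26, 31, 41] * c[35, 34, 40, 45]

def Fmove : Perm (Fin 48) :=
  c[21, 17, 22, 14] * c[3, 8, 15, 11] * c[26, 32, 42, 34] * c[28, 36, 31, 39] * c[35, 44, 38, 46]

def Rmove : Perm (Fin 48) :=
  c[16, 12, 20, 8] * c[1, 4, 9, 17] * c[44, 43, 47, 36] * c[25, 29, 38, 32] * c[28, 37, 33, 42]

def Bmove : Perm (Fin 48) :=
  c[10, 18, 23, 4] * c[0, 2, 6, 12] * c[37, 45, 41, 29] * c[24, 27, 33, 43] * c[25, 30, 40, 47]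

def Dmove : Perm (Fin 48) :=
  c[15, 9, 6, 13] * c[22, 20, 23, 19] * c[31, 38, 33, 40] * c[34, 36, 29, 27] * c[42, 47, 41, 46]

/-- The Rubik's cube group: the subgroup of the symmetric group on the 48 facelets
generated by the six clockwise quarter-turn face moves. -/
def cubeGroup : Subgroup (Perm (Fin 48)) :=
  Subgroup.closure {Umove, Lmove, Fmove, Rmove, Bmove, Dmove}

/-- The six face moves together with their inverses. -/
def cubeGens : Set (Perm (Fin 48)) :=
  {Umove, Lmove, Fmove, Rmove, Bmove, Dmove,
   Umove⁻¹, Lmove⁻¹, Fmove⁻¹, Rmove⁻¹, Bmove⁻¹, Dmove⁻¹}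
def uEdge : Perm {x : Fin 48 // (x : ℕ) < 24} := Umove.subtypePerm (by decide)
def lEdge : Perm {x : Fin 48 // (x : ℕ) < 24} := Lmove.subtypePerm (by decide)
def fEdge : Perm {x : Fin 48 // (x : ℕ) < 24} := Fmove.subtypePerm (by decide)
def rEdge : Perm {x : Fin 48 // (x : ℕ) < 24} := Rmove.subtypePerm (by decide)
def bEdge : Perm {x : Fin 48 // (x : ℕ) < 24} := Bmove.subtypePerm (by decide)
def dEdge : Perm {x : Fin 48 // (x : ℕ) < 24} := Dmove.subtypePerm (by decide)

/-- The edge group `R_e`, generated by the restrictions of the six face moves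
to the edge facelets. -/
def edgeGroup : Subgroup (Perm {x : Fin 48 // (x : ℕ) < 24}) :=
  Subgroup.closure {uEdge, lEdge, fEdge, rEdge, bEdge, dEdge}
def uCorner : Perm {x : Fin 48 // 24 ≤ (x : ℕ)} := Umove.subtypePerm (by decide)
def lCorner : Perm {x : Fin 48 // 24 ≤ (x : ℕ)} := Lmove.subtypePerm (by decide)
def fCorner : Perm {x : Fin 48 // 24 ≤ (x : ℕ)} := Fmove.subtypePerm (by decide)
def rCorner : Perm {x : Fin 48 // 24 ≤ (x : ℕ)} := Rmove.subtypePerm (by decide)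
def bCorner : Perm {x : Fin 48 // 24 ≤ (x : ℕ)} := Bmove.subtypePerm (by decide)
def dCorner : Perm {x : Fin 48 // 24 ≤ (x : ℕ)} := Dmove.subtypePerm (by decide)

/-- The corner group `R_c`, generated by the restrictions of the six face moves
to the corner facelets. -/
def cornerGroup : Subgroup (Perm {x : Fin 48 // 24 ≤ (x : ℕ)}) :=
  Subgroup.closure {uCorner, lCorner, fCorner, rCorner, bCorner, dCorner}

/-- The edge group extended to act on all 48 facelets, fixing the corner facelets pointwise. -/
def edgeGroupExt : Subgroup (Perm (Fin 48)) :=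
  edgeGroup.map Perm.ofSubtype

/-- The corner group extended to act on all 48 facelets, fixing the edge facelets pointwise. -/
def cornerGroupExt : Subgroup (Perm (Fin 48)) :=
  cornerGroup.map Perm.ofSubtype

/-- The group generated by the twelve restricted permutations
`u_e, …, d_e` (extended by the identity on corners) and `u_c, …, d_c`
(extended by the identity on edges). -/
def bigGroup : Subgroup (Perm (Fin 48)) :=
  Subgroup.closure
    {Perm.ofSubtype uEdge, Perm.ofSubtype lEdge, Perm.ofSubtype fEdge,
     Perm.ofSubtype rEdge, Perm.ofSubtype bEdge, Perm.ofSubtype dEdge,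
     Perm.ofSubtype uCorner, Perm.ofSubtype lCorner, Perm.ofSubtype fCorner,
     Perm.ofSubtype rCorner, Perm.ofSubtype bCorner, Perm.ofSubtype dCorner}

set_option maxRecDepth 2000000 in
def tE : Perm (Fin 48) := Perm.ofSubtype uEdge
def TU : Perm (Fin 48) := ⟨![1, 3, 2, 7, 4, 10, 6, 0, 8, 9, 16, 11, 12, 13, 14, 15, 21, 17, 18, 19, 20, 5, 22, 23, 25, 28, 30, 27, 35, 29, 37, 31, 39, 33, 34, 24, 36, 44, 38, 45, 40, 41, 42, 32, 26, 43, 46, 47], ![7, 0, 2, 1, 4, 21, 6, 3, 8, 9, 5, 11, 12, 13, 14, 15, 10, 17, 18, 19, 20, 16, 22, 23, 35, 24, 44, 27, 25, 29, 26, 31, 43, 33, 34, 28, 36, 30, 38, 32, 40, 41, 42, 45, 37, 39, 46, 47], by decide, by decide⟩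
def TL : Perm (Fin 48) := ⟨![0, 1, 5, 3, 4, 11, 6, 14, 8, 9, 10, 19, 12, 18, 13, 15, 16, 17, 7, 2, 20, 21, 22, 23, 26, 25, 31, 30, 28, 29, 39, 41, 32, 33, 40, 34, 36, 37, 38, 46, 45, 24, 42, 43, 44, 35, 27, 47], ![0, 1, 19, 3, 4, 2, 6, 18, 8, 9, 10, 5, 12, 14, 7, 15, 16, 17, 13, 11, 20, 21, 22, 23, 41, 25, 24, 46, 28, 29, 27, 26, 32, 33, 35, 45, 36, 37, 38, 30, 34, 31, 42, 43, 44, 40, 39, 47], by decide, by decide⟩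
def TF : Perm (Fin 48) := ⟨![0, 1, 2, 8, 4, 5, 6, 7, 15, 9, 10, 3, 12, 13, 21, 11, 16, 22, 18, 19, 20, 17, 14, 23, 24, 25, 32, 27, 36, 29, 30, 39, 42, 33, 26, 44, 31, 37, 46, 28, 40, 41, 34, 43, 38, 45, 35, 47], ![0, 1, 2, 11, 4, 5, 6, 7, 3, 9, 10, 15, 12, 13, 22, 8, 16, 21, 18, 19, 20, 14, 17, 23, 24, 25, 34, 27, 39, 29, 30, 36, 26, 33, 42, 46, 28, 37, 44, 31, 40, 41, 32, 43, 35, 45, 38, 47], by decide, by decide⟩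
def TR : Perm (Fin 48) := ⟨![0, 4, 2, 3, 9, 5, 6, 7, 16, 17, 10, 11, 20, 13, 14, 15, 12, 1, 18, 19, 8, 21, 22, 23, 24, 29, 26, 27, 37, 38, 30, 31, 25, 42, 34, 35, 44, 33, 32, 39, 40, 41, 28, 47, 43, 45, 46, 36], ![0, 17, 2, 3, 1, 5, 6, 7, 20, 4, 10, 11, 16, 13, 14, 15, 8, 9, 18, 19, 12, 21, 22, 23, 24, 32, 26, 27, 42, 25, 30, 31, 38, 37, 34, 35, 47, 28, 29, 39, 40, 41, 33, 44, 36, 45, 46, 43], by decide, by decide⟩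
def TB : Perm (Fin 48) := ⟨![2, 1, 6, 3, 10, 5, 12, 7, 8, 9, 18, 11, 0, 13, 14, 15, 16, 17, 23, 19, 20, 21, 22, 4, 27, 30, 26, 33, 28, 37, 40, 31, 32, 43, 34, 35, 36, 45, 38, 39, 47, 29, 42, 24, 44, 41, 46, 25], ![12, 1, 0, 3, 23, 5, 2, 7, 8, 9, 4, 11, 6, 13, 14, 15, 16, 17, 10, 19, 20, 21, 22, 18, 43, 47, 26, 24, 28, 41, 25, 31, 32, 27, 34, 35, 36, 29, 38, 39, 30, 45, 42, 33, 44, 37, 46, 40], by decide, by decide⟩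
def TD : Perm (Fin 48) := ⟨![0, 1, 2, 3, 4, 5, 13, 7, 8, 6, 10, 11, 12, 15, 14, 9, 16, 17, 18, 22, 23, 21, 20, 19, 24, 25, 26, 34, 28, 27, 30, 38, 32, 40, 36, 35, 29, 37, 33, 39, 31, 46, 47, 43, 44, 45, 42, 41], ![0, 1, 2, 3, 4, 5, 9, 7, 8, 15, 10, 11, 12, 6, 14, 13, 16, 17, 18, 23, 22, 21, 19, 20, 24, 25, 26, 29, 28, 36, 30, 40, 32, 38, 27, 35, 34, 37, 31, 39, 33, 47, 46, 43, 44, 45, 41, 42], by decide, by decide⟩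
theorem hTU : Umove = TU := by decide
theorem hTL : Lmove = TL := by decide
theorem hTF : Fmove = TF := by decide
theorem hTR : Rmove = TR := by decide
theorem hTB : Bmove = TB := by decide
theorem hTD : Dmove = TD := by decide
theorem mMvU : Umove ∈ cubeGroup := Subgroup.subset_closure (Set.mem_insert _ _)
theorem mTU : TU ∈ cubeGroup := by rw [← hTU]; exact mMvU
theorem mMvL : Lmove ∈ cubeGroup := Subgroup.subset_closure (Set.mem_insert_of_mem _ (Set.mem_insert _ _))
theorem mTL : TL ∈ cubeGroup := by rw [← hTL]; exact mMvL
theorem mMvF : Fmove ∈ cubeGroup := Subgroup.subset_closure (Set.mem_insert_of_mem _ (Set.mem_insert_of_mem _ (Set.mem_insert _ _)))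
theorem mTF : TF ∈ cubeGroup := by rw [← hTF]; exact mMvF
theorem mMvR : Rmove ∈ cubeGroup := Subgroup.subset_closure (Set.mem_insert_of_mem _ (Set.mem_insert_of_mem _ (Set.mem_insert_of_mem _ (Set.mem_insert _ _))))
theorem mTR : TR ∈ cubeGroup := by rw [← hTR]; exact mMvR
theorem mMvB : Bmove ∈ cubeGroup := Subgroup.subset_closure (Set.mem_insert_of_mem _ (Set.mem_insert_of_mem _ (Set.mem_insert_of_mem _ (Set.mem_insert_of_mem _ (Set.mem_insert _ _)))))
theorem mTB : TB ∈ cubeGroup := by rw [← hTB]; exact mMvB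
theorem mMvD : Dmove ∈ cubeGroup := Subgroup.subset_closure (Set.mem_insert_of_mem _ (Set.mem_insert_of_mem _ (Set.mem_insert_of_mem _ (Set.mem_insert_of_mem _ (Set.mem_insert_of_mem _ (Set.mem_singleton _))))))
theorem mTD : TD ∈ cubeGroup := by rw [← hTD]; exact mMvD
def pieceIdx : Fin 48 → Fin 20 := ![0, 1, 2, 3, 4, 5, 6, 5, 7, 8, 0, 9, 4, 10, 9, 11, 1, 7, 2, 10, 8, 3, 11, 6, 12, 13, 14, 15, 16, 17, 12, 18, 16, 17, 18, 14, 19, 13, 19, 14, 15, 15, 19, 13, 16, 12, 18, 17]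
def pieceRep : Fin 20 → Fin 48 := ![0, 1, 2, 3, 4, 5, 6, 8, 9, 11, 13, 15, 24, 25, 26, 27, 28, 29, 31, 36]
theorem hrep : ∀ i, pieceIdx (pieceRep i) = i := by decide
theorem hsec : ∀ x, pieceIdx (pieceRep (pieceIdx x)) = pieceIdx x := by decide

def goodK (g : Perm (Fin 48)) : Prop :=
  ∀ x y : Fin 48, pieceIdx x = pieceIdx y ↔ pieceIdx (g x) = pieceIdx (g y)

def KK : Subgroup (Perm (Fin 48)) where
  carrier := {g | goodK g}
  one_mem' := fun _ _ => Iff.rfl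
  mul_mem' := by
    intro a b ha hb x y
    exact (hb x y).trans (ha (b x) (b y))
  inv_mem' := by
    intro a ha x y
    have h := ha (a⁻¹ x) (a⁻¹ y)
    simp only [← Equiv.Perm.mul_apply, mul_inv_cancel, Equiv.Perm.one_apply] at h
    exact h.symm

theorem memK_of {g : Perm (Fin 48)} (σ : Perm (Fin 20))
    (h : ∀ x, pieceIdx (g x) = σ (pieceIdx x)) : g ∈ KK := by
  intro x y
  constructor
  · intro hxy; rw [h, h, hxy]
  · intro hxy; rw [h, h] at hxy; exact σ.injective hxy

def φφ : ↥KK →* Perm (Fin 20) where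
  toFun g :=
    { toFun := fun i => pieceIdx (g.1 (pieceRep i))
      invFun := fun i => pieceIdx (g.1⁻¹ (pieceRep i))
      left_inv := fun i => by
        have h1 := (KK.inv_mem g.2) (pieceRep (pieceIdx (g.1 (pieceRep i)))) (g.1 (pieceRep i))
        have h2 := h1.mp (hsec _)
        simpa [hrep] using h2
      right_inv := fun i => by
        have h1 := g.2 (pieceRep (pieceIdx (g.1⁻¹ (pieceRep i)))) (g.1⁻¹ (pieceRep i))
        have h2 := h1.mp (hsec _)
        simpa [hrep] using h2 }
  map_one' := Equiv.ext fun i => hrep i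
  map_mul' a b := Equiv.ext fun i =>
    ((a.2 (pieceRep (pieceIdx (b.1 (pieceRep i)))) (b.1 (pieceRep i))).mp (hsec _)).symm

theorem φφ_eq {g : Perm (Fin 48)} (σ : Perm (Fin 20))
    (h : ∀ x, pieceIdx (g x) = σ (pieceIdx x)) (hK : g ∈ KK) : φφ ⟨g, hK⟩ = σ :=
  Equiv.ext fun i => by
    show pieceIdx (g (pieceRep i)) = σ i
    rw [h, hrep]

def σU : Perm (Fin 20) := swap 0 1 * swap 1 3 * swap 3 5 * swap 12 13 * swap 13 16 * swap 16 14
theorem hσU : ∀ x, pieceIdx (Umove x) = σU (pieceIdx x) := by decide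
theorem sσU : Perm.sign σU = 1 := by decide
def σL : Perm (Fin 20) := swap 2 5 * swap 5 9 * swap 9 10 * swap 12 14 * swap 14 18 * swap 18 15
theorem hσL : ∀ x, pieceIdx (Lmove x) = σL (pieceIdx x) := by decide
theorem sσL : Perm.sign σL = 1 := by decide
def σF : Perm (Fin 20) := swap 3 7 * swap 7 11 * swap 11 9 * swap 14 16 * swap 16 19 * swap 19 18
theorem hσF : ∀ x, pieceIdx (Fmove x) = σF (pieceIdx x) := by decide
theorem sσF : Perm.sign σF = 1 := by decide
def σR : Perm (Fin 20) := swap 1 4 * swap 4 8 * swap 8 7 * swap 13 17 * swap 17 19 * swap 19 16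
theorem hσR : ∀ x, pieceIdx (Rmove x) = σR (pieceIdx x) := by decide
theorem sσR : Perm.sign σR = 1 := by decide
def σB : Perm (Fin 20) := swap 0 2 * swap 2 6 * swap 6 4 * swap 12 15 * swap 15 17 * swap 17 13
theorem hσB : ∀ x, pieceIdx (Bmove x) = σB (pieceIdx x) := by decide
theorem sσB : Perm.sign σB = 1 := by decide
def σD : Perm (Fin 20) := swap 6 10 * swap 10 11 * swap 11 8 * swap 15 18 * swap 18 19 * swap 19 17
theorem hσD : ∀ x, pieceIdx (Dmove x) = σD (pieceIdx x) := by decide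
theorem sσD : Perm.sign σD = 1 := by decide
def σt : Perm (Fin 20) := swap 0 1 * swap 1 3 * swap 3 5
theorem hσt : ∀ x, pieceIdx (tE x) = σt (pieceIdx x) := by decide
theorem sσt : Perm.sign σt = -1 := by decide

theorem KleK : cubeGroup ≤ KK := by
  apply (Subgroup.closure_le _).mpr
  intro x hx
  simp only [Set.mem_insert_iff, Set.mem_singleton_iff] at hx
  rcases hx with rfl | rfl | rfl | rfl | rfl | rfl
  · exact memK_of σU hσU
  · exact memK_of σL hσL
  · exact memK_of σF hσF
  · exact memK_of σR hσR
  · exact memK_of σB hσB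
  · exact memK_of σD hσD

theorem χcube : ∀ g ∈ cubeGroup, ∀ hK : g ∈ KK, Perm.sign (φφ ⟨g, hK⟩) = 1 := by
  intro g hg
  induction hg using Subgroup.closure_induction with
  | mem x hx =>
    simp only [Set.mem_insert_iff, Set.mem_singleton_iff] at hx
    rcases hx with rfl | rfl | rfl | rfl | rfl | rfl
    · intro hK; rw [φφ_eq σU hσU]; exact sσU
    · intro hK; rw [φφ_eq σL hσL]; exact sσL
    · intro hK; rw [φφ_eq σF hσF]; exact sσF
    · intro hK; rw [φφ_eq σR hσR]; exact sσR
    · intro hK; rw [φφ_eq σB hσB]; exact sσB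
    · intro hK; rw [φφ_eq σD hσD]; exact sσD
  | one =>
    intro hK
    rw [show (⟨1, hK⟩ : ↥KK) = 1 from rfl, map_one, map_one]
  | mul x y hx hy ihx ihy =>
    intro hK
    rw [show (⟨x * y, hK⟩ : ↥KK) = ⟨x, KleK hx⟩ * ⟨y, KleK hy⟩ from rfl, map_mul, map_mul,
      ihx (KleK hx), ihy (KleK hy), one_mul]
  | inv x hx ihx =>
    intro hK
    rw [show (⟨x⁻¹, hK⟩ : ↥KK) = (⟨x, KleK hx⟩)⁻¹ from rfl, map_inv, map_inv, ihx (KleK hx),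
      inv_one]

theorem htC : tE ∉ cubeGroup := fun h => by
  have e1 := χcube tE h (memK_of σt hσt)
  rw [φφ_eq σt hσt] at e1
  rw [sσt] at e1
  exact absurd e1 (by decide)

def Q0 : Perm (Fin 48) := ⟨![0, 17, 2, 7, 1, 21, 6, 3, 20, 4, 10, 11, 16, 13, 14, 15, 8, 9, 18, 19, 12, 5, 22, 23, 25, 39, 30, 27, 42, 28, 37, 31, 38, 44, 34, 24, 47, 35, 29, 45, 40, 41, 33, 26, 36, 43, 46, 32], ![0, 4, 2, 7, 9, 21, 6, 3, 16, 17, 10, 11, 20, 13, 14, 15, 12, 1, 18, 19, 8, 5, 22, 23, 35, 24, 43, 27, 29, 38, 26, 31, 47, 42, 34, 37, 44, 30, 32, 25, 40, 41, 28, 45, 33, 39, 46, 36], by decide, by decide⟩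
theorem eQ0 : Q0 = TU * TR * TU⁻¹ * TR * TU * TR * TU * TR * TU⁻¹ * TR⁻¹ * TU⁻¹ * TR := by decide
theorem mQ0 : Q0 ∈ cubeGroup := by rw [eQ0]; exact mul_mem (mul_mem (mul_mem (mul_mem (mul_mem (mul_mem (mul_mem (mul_mem (mul_mem (mul_mem (mul_mem (mTU) mTR) (inv_mem mTU)) mTR) mTU) mTR) mTU) mTR) (inv_mem mTU)) (inv_mem mTR)) (inv_mem mTU)) mTR
def Q1 : Perm (Fin 48) := ⟨![0, 17, 2, 7, 1, 21, 6, 3, 20, 4, 10, 11, 16, 13, 14, 15, 8, 9, 18, 19, 12, 5, 22, 23, 29, 32, 30, 27, 42, 39, 33, 31, 38, 35, 34, 24, 25, 28, 37, 45, 40, 41, 43, 44, 36, 47, 46, 26], ![0, 4, 2, 7, 9, 21, 6, 3, 16, 17, 10, 11, 20, 13, 14, 15, 12, 1, 18, 19, 8, 5, 22, 23, 35, 36, 47, 27, 37, 24, 26, 31, 25, 30, 34, 33, 44, 38, 32, 29, 40, 41, 28, 42, 43, 39, 46, 45], by decide, by decide⟩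
theorem eQ1 : Q1 = TR * TU * TR * TU⁻¹ * TR * TU * TR * TU * TR * TU⁻¹ * TR⁻¹ * TU⁻¹ := by decide
theorem mQ1 : Q1 ∈ cubeGroup := by rw [eQ1]; exact mul_mem (mul_mem (mul_mem (mul_mem (mul_mem (mul_mem (mul_mem (mul_mem (mul_mem (mul_mem (mul_mem (mTR) mTU) mTR) (inv_mem mTU)) mTR) mTU) mTR) mTU) mTR) (inv_mem mTU)) (inv_mem mTR)) (inv_mem mTU)
def Q2 : Perm (Fin 48) := ⟨![3, 7, 2, 0, 17, 20, 6, 9, 12, 1, 21, 11, 8, 13, 14, 15, 5, 4, 18, 19, 16, 10, 22, 23, 33, 35, 42, 27, 24, 32, 47, 31, 45, 28, 34, 38, 43, 26, 25, 36, 40, 41, 37, 39, 30, 29, 46, 44], ![3, 9, 2, 0, 17, 16, 6, 1, 12, 7, 21, 11, 8, 13, 14, 15, 20, 4, 18, 19, 5, 10, 22, 23, 28, 38, 37, 27, 33, 45, 44, 31, 29, 24, 34, 25, 39, 42, 35, 43, 40, 41, 26, 36, 47, 32, 46, 30], by decide, by decide⟩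
theorem eQ2 : Q2 = TR * TR * TU * TU := by decide
theorem mQ2 : Q2 ∈ cubeGroup := by rw [eQ2]; exact mul_mem (mul_mem (mul_mem (mTR) mTR) mTU) mTU
theorem heq_tsq : tE * tE = Q0 * Q1 * Q2 := by decide
theorem mem_tsq : tE * tE ∈ cubeGroup := by rw [heq_tsq]; exact mul_mem (mul_mem (mQ0) mQ1) mQ2
def Q3 : Perm (Fin 48) := ⟨![7, 0, 2, 3, 1, 20, 6, 9, 8, 4, 5, 11, 16, 13, 14, 15, 10, 17, 18, 19, 12, 21, 22, 23, 44, 47, 24, 27, 25, 26, 32, 31, 43, 39, 34, 45, 36, 29, 38, 30, 40, 41, 42, 33, 37, 28, 46, 35], ![1, 4, 2, 3, 9, 10, 6, 0, 8, 7, 16, 11, 20, 13, 14, 15, 12, 17, 18, 19, 5, 21, 22, 23, 26, 28, 29, 27, 45, 37, 39, 31, 30, 43, 34, 47, 36, 44, 38, 33, 40, 41, 42, 32, 24, 35, 46, 25], by decide, by decide⟩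
theorem eQ3 : Q3 = TR⁻¹ * TU * TU * TR * TU * TR * TU⁻¹ * TR * TU * TR * TU * TR := by decide
theorem mQ3 : Q3 ∈ cubeGroup := by rw [eQ3]; exact mul_mem (mul_mem (mul_mem (mul_mem (mul_mem (mul_mem (mul_mem (mul_mem (mul_mem (mul_mem (mul_mem ((inv_mem mTR)) mTU) mTU) mTR) mTU) mTR) (inv_mem mTU)) mTR) mTU) mTR) mTU) mTR
def Q4 : Perm (Fin 48) := ⟨![1, 0, 2, 4, 9, 21, 6, 3, 8, 7, 16, 11, 20, 13, 14, 15, 10, 17, 18, 19, 5, 12, 22, 23, 45, 47, 44, 27, 26, 37, 24, 31, 35, 43, 34, 28, 36, 29, 38, 32, 40, 41, 42, 33, 39, 30, 46, 25], ![1, 0, 2, 7, 3, 20, 6, 9, 8, 4, 16, 11, 21, 13, 14, 15, 10, 17, 18, 19, 12, 5, 22, 23, 30, 47, 28, 27, 35, 37, 45, 31, 39, 43, 34, 32, 36, 29, 38, 44, 40, 41, 42, 33, 26, 24, 46, 25], by decide, by decide⟩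
theorem eQ4 : Q4 = TU⁻¹ * TR⁻¹ * TU⁻¹ * TR * TR * TU⁻¹ * TR⁻¹ * TU * TU * TR * TU * TU := by decide
theorem mQ4 : Q4 ∈ cubeGroup := by rw [eQ4]; exact mul_mem (mul_mem (mul_mem (mul_mem (mul_mem (mul_mem (mul_mem (mul_mem (mul_mem (mul_mem (mul_mem ((inv_mem mTU)) (inv_mem mTR)) (inv_mem mTU)) mTR) mTR) (inv_mem mTU)) (inv_mem mTR)) mTU) mTU) mTR) mTU) mTU
def Q5 : Perm (Fin 48) := ⟨![18, 17, 19, 3, 0, 16, 6, 1, 20, 4, 2, 5, 10, 14, 7, 15, 8, 9, 13, 11, 12, 21, 22, 23, 41, 32, 24, 46, 42, 25, 27, 26, 38, 37, 35, 45, 47, 28, 29, 30, 34, 31, 33, 44, 36, 40, 39, 43], ![4, 7, 10, 3, 9, 11, 6, 14, 16, 17, 12, 19, 20, 18, 13, 15, 5, 1, 0, 2, 8, 21, 22, 23, 26, 29, 31, 30, 37, 38, 39, 41, 25, 42, 40, 34, 44, 33, 32, 46, 45, 24, 28, 47, 43, 35, 27, 36], by decide, by decide⟩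
theorem eQ5 : Q5 = TL⁻¹ * TR * TU⁻¹ * TR * TU * TR * TU * TR * TU⁻¹ * TR⁻¹ * TU⁻¹ * TR := by decide
theorem mQ5 : Q5 ∈ cubeGroup := by rw [eQ5]; exact mul_mem (mul_mem (mul_mem (mul_mem (mul_mem (mul_mem (mul_mem (mul_mem (mul_mem (mul_mem (mul_mem ((inv_mem mTL)) mTR) (inv_mem mTU)) mTR) mTU) mTR) mTU) mTR) (inv_mem mTU)) (inv_mem mTR)) (inv_mem mTU)) mTR
def Q6 : Perm (Fin 48) := ⟨![13, 17, 12, 9, 1, 21, 6, 3, 10, 18, 19, 11, 16, 7, 14, 15, 8, 0, 4, 5, 2, 20, 22, 23, 35, 32, 30, 43, 47, 40, 26, 31, 33, 41, 34, 24, 42, 28, 36, 45, 25, 37, 38, 44, 29, 39, 46, 27], ![17, 4, 20, 7, 18, 19, 6, 13, 16, 3, 8, 11, 2, 0, 14, 15, 12, 1, 9, 10, 21, 5, 22, 23, 35, 40, 30, 47, 37, 44, 26, 31, 25, 32, 34, 24, 38, 41, 42, 45, 29, 33, 36, 27, 43, 39, 46, 28], by decide, by decide⟩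
theorem eQ6 : Q6 = TR * TL * TU * TU * TL * TL * TU * TU * TL⁻¹ * TR * TU⁻¹ * TR := by decide
theorem mQ6 : Q6 ∈ cubeGroup := by rw [eQ6]; exact mul_mem (mul_mem (mul_mem (mul_mem (mul_mem (mul_mem (mul_mem (mul_mem (mul_mem (mul_mem (mul_mem (mTR) mTL) mTU) mTU) mTL) mTL) mTU) mTU) (inv_mem mTL)) mTR) (inv_mem mTU)) mTR
def Q7 : Perm (Fin 48) := ⟨![7, 14, 20, 0, 3, 8, 6, 17, 12, 1, 5, 19, 21, 18, 13, 15, 11, 4, 9, 2, 16, 10, 22, 23, 33, 34, 35, 28, 30, 42, 47, 41, 24, 36, 40, 39, 43, 31, 25, 26, 44, 32, 37, 46, 45, 29, 27, 38], ![3, 9, 19, 4, 17, 10, 6, 0, 5, 18, 21, 16, 8, 14, 1, 15, 20, 7, 13, 11, 2, 12, 22, 23, 32, 38, 39, 46, 27, 45, 28, 37, 41, 24, 25, 26, 33, 42, 47, 35, 34, 31, 29, 36, 40, 44, 43, 30], by decide, by decide⟩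
theorem eQ7 : Q7 = TU * TR * TU * TR * TU⁻¹ * TR⁻¹ * TU⁻¹ * TR * TR * TL * TU * TU := by decide
theorem mQ7 : Q7 ∈ cubeGroup := by rw [eQ7]; exact mul_mem (mul_mem (mul_mem (mul_mem (mul_mem (mul_mem (mul_mem (mul_mem (mul_mem (mul_mem (mul_mem (mTU) mTR) mTU) mTR) (inv_mem mTU)) (inv_mem mTR)) (inv_mem mTU)) mTR) mTR) mTL) mTU) mTU
def Q8 : Perm (Fin 48) := ⟨![0, 1, 11, 3, 4, 19, 6, 13, 8, 9, 10, 2, 12, 7, 18, 15, 16, 17, 14, 5, 20, 21, 22, 23, 31, 25, 41, 39, 28, 29, 46, 24, 32, 33, 45, 40, 36, 37, 38, 27, 35, 26, 42, 43, 44, 34, 30, 47], ![0, 1, 11, 3, 4, 19, 6, 13, 8, 9, 10, 2, 12, 7, 18, 15, 16, 17, 14, 5, 20, 21, 22, 23, 31, 25, 41, 39, 28, 29, 46, 24, 32, 33, 45, 40, 36, 37, 38, 27, 35, 26, 42, 43, 44, 34, 30, 47], by decide, by decide⟩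
theorem eQ8 : Q8 = TL * TL := by decide
theorem mQ8 : Q8 ∈ cubeGroup := by rw [eQ8]; exact mul_mem (mTL) mTL
theorem heq_eL : Perm.ofSubtype lEdge * tE = Q3 * Q4 * Q5 * Q6 * Q7 * Q8 := by decide
theorem mem_eL : Perm.ofSubtype lEdge * tE ∈ cubeGroup := by rw [heq_eL]; exact mul_mem (mul_mem (mul_mem (mul_mem (mul_mem (mQ3) mQ4) mQ5) mQ6) mQ7) mQ8
def Q9 : Perm (Fin 48) := ⟨![3, 23, 9, 1, 8, 10, 2, 0, 5, 4, 21, 11, 17, 13, 14, 15, 6, 7, 20, 19, 12, 16, 22, 18, 44, 41, 33, 38, 26, 25, 32, 31, 35, 37, 34, 29, 30, 27, 45, 47, 42, 36, 24, 40, 39, 28, 46, 43], ![7, 3, 6, 0, 9, 8, 16, 17, 4, 2, 5, 11, 20, 13, 14, 15, 21, 12, 23, 19, 18, 10, 22, 1, 42, 29, 28, 37, 45, 35, 36, 31, 30, 26, 34, 32, 41, 33, 27, 44, 43, 25, 40, 47, 24, 38, 46, 39], by decide, by decide⟩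
theorem eQ9 : Q9 = TR * TR * TU * TB⁻¹ * TR⁻¹ * TU⁻¹ * TR * TU * TR * TU * TR * TU⁻¹ := by decide
theorem mQ9 : Q9 ∈ cubeGroup := by rw [eQ9]; exact mul_mem (mul_mem (mul_mem (mul_mem (mul_mem (mul_mem (mul_mem (mul_mem (mul_mem (mul_mem (mul_mem (mTR) mTR) mTU) (inv_mem mTB)) (inv_mem mTR)) (inv_mem mTU)) mTR) mTU) mTR) mTU) mTR) (inv_mem mTU)
def Q10 : Perm (Fin 48) := ⟨![17, 9, 6, 4, 2, 5, 16, 7, 10, 21, 8, 11, 18, 13, 14, 15, 20, 0, 23, 19, 3, 12, 22, 1, 24, 35, 27, 37, 29, 36, 30, 31, 47, 38, 34, 41, 28, 26, 44, 40, 43, 25, 32, 39, 33, 45, 46, 42], ![17, 23, 4, 20, 3, 5, 2, 7, 10, 1, 8, 11, 21, 13, 14, 15, 6, 0, 12, 19, 16, 9, 22, 18, 24, 41, 37, 26, 36, 28, 30, 31, 42, 44, 34, 25, 29, 27, 33, 43, 39, 35, 47, 40, 38, 45, 46, 32], by decide, by decide⟩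
theorem eQ10 : Q10 = TR⁻¹ * TU⁻¹ * TB * TU⁻¹ * TR * TR * TF * TU * TU * TF⁻¹ * TU * TR := by decide
theorem mQ10 : Q10 ∈ cubeGroup := by rw [eQ10]; exact mul_mem (mul_mem (mul_mem (mul_mem (mul_mem (mul_mem (mul_mem (mul_mem (mul_mem (mul_mem (mul_mem ((inv_mem mTR)) (inv_mem mTU)) mTB) (inv_mem mTU)) mTR) mTR) mTF) mTU) mTU) (inv_mem mTF)) mTU) mTR
def Q11 : Perm (Fin 48) := ⟨![17, 7, 2, 0, 1, 21, 6, 3, 20, 4, 8, 11, 16, 13, 14, 15, 5, 9, 18, 19, 12, 10, 22, 23, 35, 24, 36, 27, 32, 25, 26, 31, 44, 37, 34, 42, 47, 30, 29, 38, 40, 41, 33, 45, 28, 39, 46, 43], ![3, 4, 2, 7, 9, 16, 6, 1, 10, 17, 21, 11, 20, 13, 14, 15, 12, 0, 18, 19, 8, 5, 22, 23, 25, 29, 30, 27, 44, 38, 37, 31, 28, 42, 34, 24, 26, 33, 39, 45, 40, 41, 35, 47, 32, 43, 46, 36], by decide, by decide⟩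
theorem eQ11 : Q11 = TU⁻¹ * TR * TU * TR * TU * TR * TU⁻¹ * TR⁻¹ * TU⁻¹ * TR * TR * TU⁻¹ := by decide
theorem mQ11 : Q11 ∈ cubeGroup := by rw [eQ11]; exact mul_mem (mul_mem (mul_mem (mul_mem (mul_mem (mul_mem (mul_mem (mul_mem (mul_mem (mul_mem (mul_mem ((inv_mem mTU)) mTR) mTU) mTR) mTU) mTR) (inv_mem mTU)) (inv_mem mTR)) (inv_mem mTU)) mTR) mTR) (inv_mem mTU)
def Q12 : Perm (Fin 48) := ⟨![4, 7, 16, 3, 20, 11, 2, 14, 15, 10, 12, 23, 9, 17, 6, 13, 5, 22, 1, 8, 0, 21, 19, 18, 34, 39, 40, 24, 43, 47, 31, 42, 37, 29, 38, 27, 32, 35, 28, 41, 30, 45, 44, 26, 25, 46, 36, 33], ![20, 18, 6, 3, 0, 16, 14, 1, 19, 12, 9, 5, 10, 15, 7, 8, 2, 13, 23, 22, 4, 21, 17, 11, 27, 44, 43, 35, 38, 33, 40, 30, 36, 47, 24, 37, 46, 32, 34, 25, 26, 39, 31, 28, 42, 41, 45, 29], by decide, by decide⟩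
theorem eQ12 : Q12 = TF * TU * TU * TF⁻¹ * TD⁻¹ * TR * TB⁻¹ * TR⁻¹ * TL * TU⁻¹ * TR * TU := by decide
theorem mQ12 : Q12 ∈ cubeGroup := by rw [eQ12]; exact mul_mem (mul_mem (mul_mem (mul_mem (mul_mem (mul_mem (mul_mem (mul_mem (mul_mem (mul_mem (mul_mem (mTF) mTU) mTU) (inv_mem mTF)) (inv_mem mTD)) mTR) (inv_mem mTB)) (inv_mem mTR)) mTL) (inv_mem mTU)) mTR) mTU
def Q13 : Perm (Fin 48) := ⟨![19, 1, 6, 3, 0, 2, 14, 18, 8, 12, 13, 20, 10, 15, 9, 5, 16, 17, 23, 22, 4, 21, 7, 11, 46, 42, 43, 35, 28, 33, 34, 30, 32, 47, 24, 37, 27, 36, 40, 25, 26, 39, 41, 38, 44, 31, 45, 29], ![4, 1, 5, 3, 20, 15, 2, 22, 8, 14, 12, 23, 9, 10, 6, 13, 16, 17, 7, 0, 11, 21, 19, 18, 34, 39, 40, 36, 28, 47, 31, 45, 32, 29, 30, 27, 37, 35, 43, 41, 38, 42, 25, 26, 44, 46, 24, 33], by decide, by decide⟩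
theorem eQ13 : Q13 = TR * TU * TR * TU⁻¹ * TR⁻¹ * TU⁻¹ * TL⁻¹ * TB * TR⁻¹ * TD := by decide
theorem mQ13 : Q13 ∈ cubeGroup := by rw [eQ13]; exact mul_mem (mul_mem (mul_mem (mul_mem (mul_mem (mul_mem (mul_mem (mul_mem (mul_mem (mTR) mTU) mTR) (inv_mem mTU)) (inv_mem mTR)) (inv_mem mTU)) (inv_mem mTL)) mTB) (inv_mem mTR)) mTD
theorem heq_eF : Perm.ofSubtype fEdge * tE = Q9 * Q10 * Q11 * Q12 * Q13 := by decide
theorem mem_eF : Perm.ofSubtype fEdge * tE ∈ cubeGroup := by rw [heq_eF]; exact mul_mem (mul_mem (mul_mem (mul_mem (mQ9) mQ10) mQ11) mQ12) mQ13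
def Q14 : Perm (Fin 48) := ⟨![14, 9, 5, 4, 0, 16, 6, 1, 22, 17, 11, 19, 10, 18, 13, 3, 20, 15, 7, 2, 8, 12, 21, 23, 34, 44, 26, 30, 37, 38, 31, 41, 25, 42, 40, 35, 33, 32, 47, 39, 45, 24, 29, 28, 43, 46, 27, 36], ![4, 7, 19, 15, 3, 2, 6, 18, 20, 1, 12, 10, 21, 14, 0, 17, 5, 9, 13, 11, 16, 22, 8, 23, 41, 32, 26, 46, 43, 42, 27, 30, 37, 36, 24, 35, 47, 28, 29, 39, 34, 31, 33, 44, 25, 40, 45, 38], by decide, by decide⟩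
theorem eQ14 : Q14 = TR * TR * TF * TF * TL * TR * TU⁻¹ * TR * TU * TR * TU * TR := by decide
theorem mQ14 : Q14 ∈ cubeGroup := by rw [eQ14]; exact mul_mem (mul_mem (mul_mem (mul_mem (mul_mem (mul_mem (mul_mem (mul_mem (mul_mem (mul_mem (mul_mem (mTR) mTR) mTF) mTF) mTL) mTR) (inv_mem mTU)) mTR) mTU) mTR) mTU) mTR
def Q15 : Perm (Fin 48) := ⟨![3, 7, 19, 17, 1, 2, 6, 18, 10, 4, 21, 20, 16, 14, 9, 15, 5, 0, 13, 11, 12, 8, 22, 23, 41, 32, 33, 46, 30, 42, 27, 43, 24, 36, 37, 29, 39, 28, 35, 47, 34, 31, 26, 44, 45, 40, 25, 38], ![17, 4, 5, 0, 9, 16, 6, 1, 21, 14, 8, 19, 20, 18, 13, 15, 12, 3, 7, 2, 11, 10, 22, 23, 32, 46, 42, 30, 37, 35, 28, 41, 25, 26, 40, 38, 33, 34, 47, 36, 45, 24, 29, 31, 43, 44, 27, 39], by decide, by decide⟩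
theorem eQ15 : Q15 = TU⁻¹ * TR⁻¹ * TU⁻¹ * TR * TR * TL⁻¹ * TF * TF * TR * TR * TF * TF := by decide
theorem mQ15 : Q15 ∈ cubeGroup := by rw [eQ15]; exact mul_mem (mul_mem (mul_mem (mul_mem (mul_mem (mul_mem (mul_mem (mul_mem (mul_mem (mul_mem (mul_mem ((inv_mem mTU)) (inv_mem mTR)) (inv_mem mTU)) mTR) mTR) (inv_mem mTL)) mTF) mTF) mTR) mTR) mTF) mTF
def Q16 : Perm (Fin 48) := ⟨![13, 17, 12, 1, 15, 5, 0, 7, 21, 18, 19, 11, 22, 9, 14, 6, 8, 3, 4, 20, 2, 16, 23, 10, 40, 32, 46, 43, 30, 38, 41, 33, 24, 42, 29, 31, 26, 28, 39, 34, 25, 37, 35, 44, 45, 27, 47, 36], ![6, 3, 20, 17, 18, 5, 15, 7, 16, 13, 23, 11, 2, 0, 14, 4, 21, 1, 9, 10, 19, 8, 12, 22, 32, 40, 36, 45, 37, 34, 28, 35, 25, 31, 39, 42, 47, 41, 29, 38, 24, 30, 33, 27, 43, 44, 26, 46], by decide, by decide⟩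
theorem eQ16 : Q16 = TD * TD * TB * TB * TR * TU⁻¹ * TR * TU * TR * TU * TR * TU⁻¹ := by decide
theorem mQ16 : Q16 ∈ cubeGroup := by rw [eQ16]; exact mul_mem (mul_mem (mul_mem (mul_mem (mul_mem (mul_mem (mul_mem (mul_mem (mul_mem (mul_mem (mul_mem (mTD) mTD) mTB) mTB) mTR) (inv_mem mTU)) mTR) mTU) mTR) mTU) mTR) (inv_mem mTU)
def Q17 : Perm (Fin 48) := ⟨![6, 13, 20, 7, 14, 21, 15, 3, 2, 4, 23, 16, 11, 0, 1, 17, 19, 18, 9, 10, 12, 5, 8, 22, 32, 42, 33, 45, 31, 39, 28, 37, 34, 35, 25, 29, 27, 36, 40, 47, 24, 30, 41, 38, 46, 44, 43, 26], ![13, 14, 8, 7, 9, 21, 0, 3, 22, 18, 19, 12, 20, 1, 4, 6, 11, 15, 17, 16, 2, 5, 23, 10, 40, 34, 47, 36, 30, 35, 41, 28, 24, 26, 32, 33, 37, 31, 43, 29, 38, 42, 25, 46, 45, 27, 44, 39], by decide, by decide⟩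
theorem eQ17 : Q17 = TR⁻¹ * TU⁻¹ * TR * TR * TB * TB * TD * TD * TF * TF * TR * TR := by decide
theorem mQ17 : Q17 ∈ cubeGroup := by rw [eQ17]; exact mul_mem (mul_mem (mul_mem (mul_mem (mul_mem (mul_mem (mul_mem (mul_mem (mul_mem (mul_mem (mul_mem ((inv_mem mTR)) (inv_mem mTU)) mTR) mTR) mTB) mTB) mTD) mTD) mTF) mTF) mTR) mTR
def Q18 : Perm (Fin 48) := ⟨![17, 3, 2, 1, 0, 5, 6, 7, 20, 4, 8, 11, 10, 13, 14, 15, 21, 9, 18, 19, 12, 16, 22, 23, 43, 42, 33, 27, 35, 32, 25, 31, 39, 28, 34, 29, 24, 36, 30, 47, 40, 41, 45, 38, 26, 37, 46, 44], ![4, 3, 2, 1, 9, 5, 6, 7, 10, 17, 12, 11, 20, 13, 14, 15, 21, 0, 18, 19, 8, 16, 22, 23, 36, 30, 44, 27, 33, 35, 38, 31, 29, 26, 34, 28, 37, 45, 43, 32, 40, 41, 25, 24, 47, 42, 46, 39], by decide, by decide⟩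
theorem eQ18 : Q18 = TU⁻¹ * TR * TU * TR * TU⁻¹ * TR * TU * TR * TU * TR * TU⁻¹ * TR⁻¹ := by decide
theorem mQ18 : Q18 ∈ cubeGroup := by rw [eQ18]; exact mul_mem (mul_mem (mul_mem (mul_mem (mul_mem (mul_mem (mul_mem (mul_mem (mul_mem (mul_mem (mul_mem ((inv_mem mTU)) mTR) mTU) mTR) (inv_mem mTU)) mTR) mTU) mTR) mTU) mTR) (inv_mem mTU)) (inv_mem mTR)
def Q19 : Perm (Fin 48) := ⟨![4, 17, 2, 1, 0, 21, 6, 3, 5, 9, 12, 11, 10, 13, 14, 15, 8, 7, 18, 19, 20, 16, 22, 23, 36, 43, 44, 27, 26, 29, 38, 31, 35, 33, 34, 28, 24, 25, 30, 32, 40, 41, 45, 37, 39, 42, 46, 47], ![4, 3, 2, 7, 0, 8, 6, 17, 16, 9, 12, 11, 10, 13, 14, 15, 21, 1, 18, 19, 20, 5, 22, 23, 36, 37, 28, 27, 35, 29, 38, 31, 39, 33, 34, 32, 24, 43, 30, 44, 40, 41, 45, 25, 26, 42, 46, 47], by decide, by decide⟩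
theorem eQ19 : Q19 = TU⁻¹ * TR * TR * TU⁻¹ * TR⁻¹ * TU * TR * TR := by decide
theorem mQ19 : Q19 ∈ cubeGroup := by rw [eQ19]; exact mul_mem (mul_mem (mul_mem (mul_mem (mul_mem (mul_mem (mul_mem ((inv_mem mTU)) mTR) mTR) (inv_mem mTU)) (inv_mem mTR)) mTU) mTR) mTR
theorem heq_eR : Perm.ofSubtype rEdge * tE = Q14 * Q15 * Q16 * Q17 * Q18 * Q19 := by decide
theorem mem_eR : Perm.ofSubtype rEdge * tE ∈ cubeGroup := by rw [heq_eR]; exact mul_mem (mul_mem (mul_mem (mul_mem (mul_mem (mQ14) mQ15) mQ16) mQ17) mQ18) mQ19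
def Q20 : Perm (Fin 48) := ⟨![7, 0, 2, 3, 1, 20, 6, 9, 8, 4, 5, 11, 16, 13, 14, 15, 10, 17, 18, 19, 12, 21, 22, 23, 44, 47, 24, 27, 25, 26, 32, 31, 43, 39, 34, 45, 36, 29, 38, 30, 40, 41, 42, 33, 37, 28, 46, 35], ![1, 4, 2, 3, 9, 10, 6, 0, 8, 7, 16, 11, 20, 13, 14, 15, 12, 17, 18, 19, 5, 21, 22, 23, 26, 28, 29, 27, 45, 37, 39, 31, 30, 43, 34, 47, 36, 44, 38, 33, 40, 41, 42, 32, 24, 35, 46, 25], by decide, by decide⟩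
theorem eQ20 : Q20 = TR⁻¹ * TU * TU * TR * TU * TR * TU⁻¹ * TR * TU * TR * TU * TR := by decide
theorem mQ20 : Q20 ∈ cubeGroup := by rw [eQ20]; exact mul_mem (mul_mem (mul_mem (mul_mem (mul_mem (mul_mem (mul_mem (mul_mem (mul_mem (mul_mem (mul_mem ((inv_mem mTR)) mTU) mTU) mTR) mTU) mTR) (inv_mem mTU)) mTR) mTU) mTR) mTU) mTR
def Q21 : Perm (Fin 48) := ⟨![4, 3, 2, 1, 9, 10, 15, 0, 8, 13, 12, 11, 20, 7, 14, 6, 21, 17, 18, 5, 19, 16, 23, 22, 26, 28, 29, 36, 45, 34, 39, 43, 30, 31, 37, 47, 27, 44, 40, 33, 38, 42, 41, 32, 24, 35, 25, 46], ![7, 3, 2, 1, 0, 19, 15, 13, 8, 4, 5, 11, 10, 9, 14, 6, 21, 17, 18, 20, 12, 16, 23, 22, 44, 46, 24, 36, 25, 26, 32, 33, 43, 39, 29, 45, 27, 34, 40, 30, 38, 42, 41, 31, 37, 28, 47, 35], by decide, by decide⟩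
theorem eQ21 : Q21 = TU⁻¹ * TR⁻¹ * TU⁻¹ * TR * TR * TU⁻¹ * TR⁻¹ * TU * TU * TR * TD * TD := by decide
theorem mQ21 : Q21 ∈ cubeGroup := by rw [eQ21]; exact mul_mem (mul_mem (mul_mem (mul_mem (mul_mem (mul_mem (mul_mem (mul_mem (mul_mem (mul_mem (mul_mem ((inv_mem mTU)) (inv_mem mTR)) (inv_mem mTU)) mTR) mTR) (inv_mem mTU)) (inv_mem mTR)) mTU) mTU) mTR) mTD) mTD
def Q22 : Perm (Fin 48) := ⟨![1, 10, 11, 12, 2, 22, 13, 15, 21, 17, 16, 6, 18, 7, 23, 9, 0, 3, 14, 5, 8, 4, 20, 19, 30, 33, 42, 39, 44, 43, 45, 27, 28, 25, 41, 38, 46, 47, 34, 36, 35, 26, 31, 29, 32, 24, 40, 37], ![16, 0, 4, 17, 21, 19, 11, 13, 20, 15, 1, 2, 3, 6, 18, 7, 10, 9, 12, 23, 22, 8, 5, 14, 45, 33, 41, 31, 32, 43, 24, 42, 44, 25, 38, 40, 39, 47, 35, 27, 46, 34, 26, 29, 28, 30, 36, 37], by decide, by decide⟩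
theorem eQ22 : Q22 = TB * TD * TR⁻¹ * TL * TL * TU⁻¹ * TR * TU * TR * TU * TR * TU⁻¹ := by decide
theorem mQ22 : Q22 ∈ cubeGroup := by rw [eQ22]; exact mul_mem (mul_mem (mul_mem (mul_mem (mul_mem (mul_mem (mul_mem (mul_mem (mul_mem (mul_mem (mul_mem (mTB) mTD) (inv_mem mTR)) mTL) mTL) (inv_mem mTU)) mTR) mTU) mTR) mTU) mTR) (inv_mem mTU)
def Q23 : Perm (Fin 48) := ⟨![4, 13, 2, 16, 21, 10, 7, 0, 17, 6, 12, 11, 3, 15, 14, 20, 19, 8, 18, 22, 23, 1, 9, 5, 25, 36, 47, 27, 45, 26, 37, 31, 30, 39, 34, 33, 32, 38, 28, 29, 40, 41, 44, 42, 24, 43, 46, 35], ![7, 21, 2, 12, 0, 23, 9, 6, 17, 22, 5, 11, 10, 1, 14, 13, 3, 8, 18, 16, 15, 4, 19, 20, 44, 24, 29, 27, 38, 39, 32, 31, 36, 35, 34, 47, 25, 30, 37, 33, 40, 41, 43, 45, 42, 28, 46, 26], by decide, by decide⟩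
theorem eQ23 : Q23 = TR⁻¹ * TU⁻¹ * TL * TL * TD⁻¹ * TB⁻¹ * TD * TD * TF⁻¹ * TU * TU * TB⁻¹ := by decide
theorem mQ23 : Q23 ∈ cubeGroup := by rw [eQ23]; exact mul_mem (mul_mem (mul_mem (mul_mem (mul_mem (mul_mem (mul_mem (mul_mem (mul_mem (mul_mem (mul_mem ((inv_mem mTR)) (inv_mem mTU)) mTL) mTL) (inv_mem mTD)) (inv_mem mTB)) mTD) mTD) (inv_mem mTF)) mTU) mTU) (inv_mem mTB)
def Q24 : Perm (Fin 48) := ⟨![0, 9, 2, 7, 22, 17, 6, 8, 12, 1, 10, 3, 15, 13, 21, 11, 20, 4, 18, 19, 16, 5, 14, 23, 25, 46, 30, 27, 33, 28, 37, 39, 29, 44, 26, 24, 42, 34, 36, 45, 40, 41, 38, 31, 47, 43, 35, 32], ![0, 9, 2, 11, 17, 21, 6, 3, 7, 1, 10, 15, 8, 13, 22, 12, 20, 5, 18, 19, 16, 14, 4, 23, 35, 24, 34, 27, 29, 32, 26, 43, 47, 28, 37, 46, 38, 30, 42, 31, 40, 41, 36, 45, 33, 39, 25, 44], by decide, by dec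ide⟩
theorem eQ24 : Q24 = TF * TU * TR * TU⁻¹ * TR * TU * TR * TU * TR * TU⁻¹ * TR⁻¹ * TU⁻¹ := by decide
theorem mQ24 : Q24 ∈ cubeGroup := by rw [eQ24]; exact mul_mem (mul_mem (mul_mem (mul_mem (mul_mem (mul_mem (mul_mem (mul_mem (mul_mem (mul_mem (mul_mem (mTF) mTU) mTR) (inv_mem mTU)) mTR) mTU) mTR) mTU) mTR) (inv_mem mTU)) (inv_mem mTR)) (inv_mem mTU)
def Q25 : Perm (Fin 48) := ⟨![11, 3, 6, 9, 5, 10, 8, 0, 12, 1, 14, 2, 7, 13, 18, 15, 21, 4, 23, 19, 16, 20, 22, 17, 29, 46, 41, 28, 38, 30, 33, 35, 36, 45, 39, 40, 43, 34, 25, 27, 44, 32, 37, 31, 42, 47, 26, 24], ![7, 9, 11, 1, 17, 4, 2, 12, 6, 3, 5, 0, 8, 13, 10, 15, 20, 23, 14, 19, 21, 16, 22, 18, 47, 38, 46, 39, 27, 24, 29, 43, 41, 30, 37, 31, 32, 42, 28, 34, 35, 26, 44, 36, 40, 33, 25, 45], by decide, by decide⟩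
theorem eQ25 : Q25 = TR * TR * TU⁻¹ * TF⁻¹ * TB * TU * TU * TF := by decide
theorem mQ25 : Q25 ∈ cubeGroup := by rw [eQ25]; exact mul_mem (mul_mem (mul_mem (mul_mem (mul_mem (mul_mem (mul_mem (mTR) mTR) (inv_mem mTU)) (inv_mem mTF)) mTB) mTU) mTU) mTF
theorem heq_eB : Perm.ofSubtype bEdge * tE = Q20 * Q21 * Q22 * Q23 * Q24 * Q25 := by decide
theorem mem_eB : Perm.ofSubtype bEdge * tE ∈ cubeGroup := by rw [heq_eB]; exact mul_mem (mul_mem (mul_mem (mul_mem (mul_mem (mQ20) mQ21) mQ22) mQ23) mQ24) mQ25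
def Q26 : Perm (Fin 48) := ⟨![7, 0, 2, 3, 1, 20, 6, 9, 8, 4, 5, 11, 16, 13, 14, 15, 10, 17, 18, 19, 12, 21, 22, 23, 44, 47, 24, 27, 25, 26, 32, 31, 43, 39, 34, 45, 36, 29, 38, 30, 40, 41, 42, 33, 37, 28, 46, 35], ![1, 4, 2, 3, 9, 10, 6, 0, 8, 7, 16, 11, 20, 13, 14, 15, 12, 17, 18, 19, 5, 21, 22, 23, 26, 28, 29, 27, 45, 37, 39, 31, 30, 43, 34, 47, 36, 44, 38, 33, 40, 41, 42, 32, 24, 35, 46, 25], by decide, by decide⟩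
theorem eQ26 : Q26 = TR⁻¹ * TU * TU * TR * TU * TR * TU⁻¹ * TR * TU * TR * TU * TR := by decide
theorem mQ26 : Q26 ∈ cubeGroup := by rw [eQ26]; exact mul_mem (mul_mem (mul_mem (mul_mem (mul_mem (mul_mem (mul_mem (mul_mem (mul_mem (mul_mem (mul_mem ((inv_mem mTR)) mTU) mTU) mTR) mTU) mTR) (inv_mem mTU)) mTR) mTU) mTR) mTU) mTR
def Q27 : Perm (Fin 48) := ⟨![2, 3, 19, 1, 12, 6, 20, 23, 8, 7, 18, 10, 4, 14, 0, 15, 21, 17, 13, 11, 5, 16, 22, 9, 37, 39, 27, 46, 45, 44, 43, 29, 30, 32, 47, 41, 36, 35, 38, 40, 34, 31, 42, 26, 24, 25, 33, 28], ![14, 3, 0, 1, 12, 20, 5, 9, 8, 23, 11, 19, 4, 18, 13, 15, 21, 17, 10, 2, 6, 16, 22, 7, 44, 45, 43, 26, 47, 31, 32, 41, 33, 46, 40, 37, 36, 24, 38, 25, 39, 35, 42, 30, 29, 28, 27, 34], by decide, by decide⟩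
theorem eQ27 : Q27 = TU⁻¹ * TR⁻¹ * TU⁻¹ * TR * TR * TU⁻¹ * TR⁻¹ * TU * TU * TR * TB * TL⁻¹ := by decide
theorem mQ27 : Q27 ∈ cubeGroup := by rw [eQ27]; exact mul_mem (mul_mem (mul_mem (mul_mem (mul_mem (mul_mem (mul_mem (mul_mem (mul_mem (mul_mem (mul_mem ((inv_mem mTU)) (inv_mem mTR)) (inv_mem mTU)) mTR) mTR) (inv_mem mTU)) (inv_mem mTR)) mTU) mTU) mTR) mTB) (inv_mem mTL)
def Q28 : Perm (Fin 48) := ⟨![9, 0, 16, 7, 17, 11, 6, 14, 12, 3, 20, 19, 8, 18, 13, 15, 10, 4, 1, 2, 21, 5, 22, 23, 38, 33, 43, 44, 34, 45, 42, 41, 46, 24, 40, 37, 39, 47, 35, 25, 32, 28, 26, 29, 31, 36, 27, 30], ![1, 18, 19, 9, 17, 21, 6, 3, 12, 0, 16, 5, 8, 14, 7, 15, 2, 4, 13, 11, 10, 20, 22, 23, 33, 39, 42, 46, 41, 43, 47, 44, 40, 25, 28, 38, 45, 35, 24, 36, 34, 31, 30, 26, 27, 29, 32, 37], by decide, by dec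ide⟩
theorem eQ28 : Q28 = TU * TU * TL * TR * TU⁻¹ * TR * TU * TR * TU * TR * TU⁻¹ * TR⁻¹ := by decide
theorem mQ28 : Q28 ∈ cubeGroup := by rw [eQ28]; exact mul_mem (mul_mem (mul_mem (mul_mem (mul_mem (mul_mem (mul_mem (mul_mem (mul_mem (mul_mem (mul_mem (mTU) mTU) mTL) mTR) (inv_mem mTU)) mTR) mTU) mTR) mTU) mTR) (inv_mem mTU)) (inv_mem mTR)
def Q29 : Perm (Fin 48) := ⟨![6, 9, 8, 7, 13, 21, 15, 3, 2, 4, 23, 11, 19, 0, 14, 1, 20, 18, 17, 10, 12, 5, 16, 22, 25, 34, 44, 45, 33, 39, 37, 42, 29, 35, 38, 28, 27, 31, 40, 32, 24, 30, 41, 46, 47, 43, 36, 26], ![13, 15, 8, 7, 9, 21, 0, 3, 2, 1, 19, 11, 20, 4, 14, 6, 22, 18, 17, 12, 16, 5, 23, 10, 40, 24, 47, 36, 35, 32, 41, 37, 39, 28, 25, 33, 46, 30, 34, 29, 38, 42, 31, 45, 26, 27, 43, 44], by decide, by decide⟩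
theorem eQ29 : Q29 = TU⁻¹ * TR * TR * TL⁻¹ * TU * TU * TL * TB * TB * TD * TD * TR := by decide
theorem mQ29 : Q29 ∈ cubeGroup := by rw [eQ29]; exact mul_mem (mul_mem (mul_mem (mul_mem (mul_mem (mul_mem (mul_mem (mul_mem (mul_mem (mul_mem (mul_mem ((inv_mem mTU)) mTR) mTR) (inv_mem mTL)) mTU) mTU) mTL) mTB) mTB) mTD) mTD) mTR
def Q30 : Perm (Fin 48) := ⟨![7, 17, 0, 3, 12, 16, 2, 1, 20, 23, 5, 11, 4, 13, 14, 15, 8, 9, 10, 19, 6, 21, 22, 18, 43, 32, 26, 24, 42, 47, 25, 31, 38, 29, 34, 35, 40, 28, 41, 39, 30, 45, 27, 44, 36, 37, 46, 33], ![2, 7, 6, 3, 12, 10, 20, 0, 16, 17, 18, 11, 4, 13, 14, 15, 5, 1, 23, 19, 8, 21, 22, 9, 27, 30, 26, 42, 37, 33, 40, 31, 25, 47, 34, 35, 44, 45, 32, 39, 36, 38, 28, 24, 43, 41, 46, 29], by decide, by decide⟩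
theorem eQ30 : Q30 = TB⁻¹ * TR * TU⁻¹ * TR * TU * TR * TU * TR * TU⁻¹ * TR⁻¹ * TU⁻¹ * TR := by decide
theorem mQ30 : Q30 ∈ cubeGroup := by rw [eQ30]; exact mul_mem (mul_mem (mul_mem (mul_mem (mul_mem (mul_mem (mul_mem (mul_mem (mul_mem (mul_mem (mul_mem ((inv_mem mTB)) mTR) (inv_mem mTU)) mTR) mTU) mTR) mTU) mTR) (inv_mem mTU)) (inv_mem mTR)) (inv_mem mTU)) mTR
def Q31 : Perm (Fin 48) := ⟨![6, 13, 2, 20, 17, 0, 12, 10, 11, 1, 23, 15, 8, 7, 22, 3, 19, 14, 18, 5, 16, 9, 21, 4, 43, 36, 34, 27, 45, 32, 25, 29, 30, 28, 47, 46, 39, 38, 35, 31, 40, 41, 26, 42, 24, 37, 33, 44], ![5, 9, 2, 15, 23, 19, 0, 13, 12, 21, 7, 8, 6, 1, 17, 11, 20, 4, 18, 16, 3, 22, 14, 10, 44, 30, 42, 27, 33, 31, 32, 39, 29, 46, 26, 38, 25, 45, 37, 36, 40, 41, 43, 24, 47, 28, 35, 34], by decide, by decide⟩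
theorem eQ31 : Q31 = TR * TB * TR⁻¹ * TD * TD * TB * TR * TR * TF * TF * TL * TL := by decide
theorem mQ31 : Q31 ∈ cubeGroup := by rw [eQ31]; exact mul_mem (mul_mem (mul_mem (mul_mem (mul_mem (mul_mem (mul_mem (mul_mem (mul_mem (mul_mem (mul_mem (mTR) mTB) (inv_mem mTR)) mTD) mTD) mTB) mTR) mTR) mTF) mTF) mTL) mTL
def Q32 : Perm (Fin 48) := ⟨![1, 9, 2, 0, 17, 5, 6, 7, 12, 3, 16, 11, 8, 13, 14, 15, 20, 4, 18, 19, 21, 10, 22, 23, 28, 38, 37, 27, 33, 45, 44, 31, 29, 24, 34, 25, 39, 42, 35, 43, 40, 41, 26, 36, 47, 32, 46, 30], ![3, 0, 2, 9, 17, 5, 6, 7, 12, 1, 21, 11, 8, 13, 14, 15, 10, 4, 18, 19, 16, 20, 22, 23, 33, 35, 42, 27, 24, 32, 47, 31, 45, 28, 34, 38, 43, 26, 25, 36, 40, 41, 37, 39, 30, 29, 46, 44], by decide, by decide⟩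
theorem eQ32 : Q32 = TU * TU * TR * TU⁻¹ * TR * TU * TR * TU * TR * TU⁻¹ * TR⁻¹ * TU⁻¹ := by decide
theorem mQ32 : Q32 ∈ cubeGroup := by rw [eQ32]; exact mul_mem (mul_mem (mul_mem (mul_mem (mul_mem (mul_mem (mul_mem (mul_mem (mul_mem (mul_mem (mul_mem (mTU) mTU) mTR) (inv_mem mTU)) mTR) mTU) mTR) mTU) mTR) (inv_mem mTU)) (inv_mem mTR)) (inv_mem mTU)
def Q33 : Perm (Fin 48) := ⟨![3, 1, 11, 15, 18, 19, 6, 13, 8, 7, 21, 12, 2, 9, 4, 0, 16, 17, 14, 20, 5, 22, 10, 23, 31, 40, 37, 36, 28, 29, 46, 24, 32, 33, 45, 25, 39, 41, 35, 43, 38, 42, 26, 27, 44, 34, 30, 47], ![15, 1, 12, 0, 14, 20, 6, 9, 8, 13, 22, 2, 11, 7, 18, 3, 16, 17, 4, 5, 19, 10, 21, 23, 31, 35, 42, 43, 28, 29, 46, 24, 32, 33, 45, 38, 27, 26, 40, 36, 25, 37, 41, 39, 44, 34, 30, 47], by decide, by decide⟩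
theorem eQ33 : Q33 = TR * TR * TU * TU * TL * TL * TF * TF * TR * TR := by decide
theorem mQ33 : Q33 ∈ cubeGroup := by rw [eQ33]; exact mul_mem (mul_mem (mul_mem (mul_mem (mul_mem (mul_mem (mul_mem (mul_mem (mul_mem (mTR) mTR) mTU) mTU) mTL) mTL) mTF) mTF) mTR) mTR
theorem heq_eD : Perm.ofSubtype dEdge * tE = Q26 * Q27 * Q28 * Q29 * Q30 * Q31 * Q32 * Q33 := by decide
theorem mem_eD : Perm.ofSubtype dEdge * tE ∈ cubeGroup := by rw [heq_eD]; exact mul_mem (mul_mem (mul_mem (mul_mem (mul_mem (mul_mem (mul_mem (mQ26) mQ27) mQ28) mQ29) mQ30) mQ31) mQ32) mQ33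
def Q34 : Perm (Fin 48) := ⟨![9, 0, 16, 7, 17, 11, 6, 14, 12, 3, 20, 19, 8, 18, 13, 15, 10, 4, 1, 2, 21, 5, 22, 23, 38, 33, 43, 44, 34, 45, 42, 41, 46, 24, 40, 37, 39, 47, 35, 25, 32, 28, 26, 29, 31, 36, 27, 30], ![1, 18, 19, 9, 17, 21, 6, 3, 12, 0, 16, 5, 8, 14, 7, 15, 2, 4, 13, 11, 10, 20, 22, 23, 33, 39, 42, 46, 41, 43, 47, 44, 40, 25, 28, 38, 45, 35, 24, 36, 34, 31, 30, 26, 27, 29, 32, 37], by decide, by decide⟩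
theorem eQ34 : Q34 = TU * TU * TL * TR * TU⁻¹ * TR * TU * TR * TU * TR * TU⁻¹ * TR⁻¹ := by decide
theorem mQ34 : Q34 ∈ cubeGroup := by rw [eQ34]; exact mul_mem (mul_mem (mul_mem (mul_mem (mul_mem (mul_mem (mul_mem (mul_mem (mul_mem (mul_mem (mul_mem (mTU) mTU) mTL) mTR) (inv_mem mTU)) mTR) mTU) mTR) mTU) mTR) (inv_mem mTU)) (inv_mem mTR)
def Q35 : Perm (Fin 48) := ⟨![1, 18, 20, 7, 17, 21, 6, 3, 12, 0, 16, 11, 8, 13, 14, 15, 2, 4, 9, 19, 10, 5, 22, 23, 42, 39, 44, 47, 41, 43, 36, 31, 40, 25, 34, 28, 45, 35, 24, 32, 29, 33, 30, 26, 27, 38, 46, 37], ![9, 0, 16, 7, 17, 21, 6, 3, 12, 18, 20, 11, 8, 13, 14, 15, 10, 4, 1, 19, 2, 5, 22, 23, 38, 33, 43, 44, 35, 40, 42, 31, 39, 41, 34, 37, 30, 47, 45, 25, 32, 28, 24, 29, 26, 36, 46, 27], by decide, by decide⟩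
theorem eQ35 : Q35 = TU⁻¹ * TR * TR * TL⁻¹ * TU * TU * TL := by decide
theorem mQ35 : Q35 ∈ cubeGroup := by rw [eQ35]; exact mul_mem (mul_mem (mul_mem (mul_mem (mul_mem (mul_mem ((inv_mem mTU)) mTR) mTR) (inv_mem mTL)) mTU) mTU) mTL
theorem heq_kL : tE⁻¹ * Lmove * tE = Q34 * Q35 := by decide
theorem mem_kL : tE⁻¹ * Lmove * tE ∈ cubeGroup := by rw [heq_kL]; exact mul_mem (mQ34) mQ35
def Q36 : Perm (Fin 48) := ⟨![9, 0, 2, 8, 22, 16, 6, 1, 12, 3, 20, 7, 15, 13, 5, 11, 10, 4, 18, 19, 21, 17, 14, 23, 46, 33, 44, 27, 25, 35, 34, 45, 43, 26, 30, 28, 42, 47, 36, 32, 40, 41, 38, 29, 37, 31, 24, 39], ![1, 7, 2, 9, 17, 14, 6, 11, 3, 0, 16, 15, 8, 13, 22, 12, 5, 21, 18, 19, 10, 20, 4, 23, 46, 28, 33, 27, 35, 43, 34, 45, 39, 25, 30, 29, 38, 44, 42, 47, 40, 41, 36, 32, 26, 31, 24, 37], by decide, by decide⟩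
theorem eQ36 : Q36 = TU * TF * TU * TR * TU⁻¹ * TR * TU * TR * TU * TR * TU⁻¹ * TR⁻¹ := by decide
theorem mQ36 : Q36 ∈ cubeGroup := by rw [eQ36]; exact mul_mem (mul_mem (mul_mem (mul_mem (mul_mem (mul_mem (mul_mem (mul_mem (mul_mem (mul_mem (mul_mem (mTU) mTF) mTU) mTR) (inv_mem mTU)) mTR) mTU) mTR) mTU) mTR) (inv_mem mTU)) (inv_mem mTR)
def Q37 : Perm (Fin 48) := ⟨![1, 3, 2, 9, 17, 14, 6, 11, 12, 0, 16, 7, 8, 13, 5, 15, 21, 4, 18, 19, 10, 20, 22, 23, 46, 28, 39, 27, 38, 43, 34, 47, 36, 25, 33, 26, 45, 44, 24, 35, 40, 41, 30, 32, 42, 31, 29, 37], ![9, 0, 2, 1, 17, 14, 6, 11, 12, 3, 20, 7, 8, 13, 5, 15, 10, 4, 18, 19, 21, 16, 22, 23, 38, 33, 35, 27, 25, 46, 42, 45, 43, 34, 30, 39, 32, 47, 28, 26, 40, 41, 44, 29, 37, 36, 24, 31], by decide, by decide⟩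
theorem eQ37 : Q37 = TU⁻¹ * TR * TR * TU⁻¹ * TF⁻¹ * TU⁻¹ * TF := by decide
theorem mQ37 : Q37 ∈ cubeGroup := by rw [eQ37]; exact mul_mem (mul_mem (mul_mem (mul_mem (mul_mem (mul_mem ((inv_mem mTU)) mTR) mTR) (inv_mem mTU)) (inv_mem mTF)) (inv_mem mTU)) mTF
theorem heq_kF : tE⁻¹ * Fmove * tE = Q36 * Q37 := by decide
theorem mem_kF : tE⁻¹ * Fmove * tE ∈ cubeGroup := by rw [heq_kF]; exact mul_mem (mQ36) mQ37
def Q38 : Perm (Fin 48) := ⟨![0, 17, 2, 7, 3, 12, 6, 4, 20, 1, 10, 11, 21, 13, 14, 15, 8, 9, 18, 19, 16, 5, 22, 23, 25, 39, 30, 27, 42, 28, 37, 31, 38, 44, 34, 24, 47, 35, 29, 45, 40, 41, 33, 26, 36, 43, 46, 32], ![0, 9, 2, 4, 7, 21, 6, 3, 16, 17, 10, 11, 5, 13, 14, 15, 20, 1, 18, 19, 8, 12, 22, 23, 35, 24, 43, 27, 29, 38, 26, 31, 47, 42, 34, 37, 44, 30, 32, 25, 40, 41, 28, 45, 33, 39,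 46, 36], by decide, by decide⟩
theorem eQ38 : Q38 = TU * TR * TR * TU⁻¹ * TR * TU * TR * TU * TR * TU⁻¹ * TR⁻¹ * TU⁻¹ := by decide
theorem mQ38 : Q38 ∈ cubeGroup := by rw [eQ38]; exact mul_mem (mul_mem (mul_mem (mul_mem (mul_mem (mul_mem (mul_mem (mul_mem (mul_mem (mul_mem (mul_mem (mTU) mTR) mTR) (inv_mem mTU)) mTR) mTU) mTR) mTU) mTR) (inv_mem mTU)) (inv_mem mTR)) (inv_mem mTU)
def Q39 : Perm (Fin 48) := ⟨![7, 9, 2, 4, 17, 21, 6, 3, 10, 1, 5, 11, 8, 13, 14, 15, 20, 0, 18, 19, 16, 12, 22, 23, 35, 38, 43, 27, 30, 32, 26, 31, 24, 28, 34, 37, 33, 42, 47, 25, 40, 41, 29, 36, 45, 39, 46, 44], ![17, 9, 2, 7, 3, 10, 6, 0, 12, 1, 8, 11, 21, 13, 14, 15, 20, 4, 18, 19, 16, 5, 22, 23, 32, 39, 30, 27, 33, 42, 28, 31, 29, 36, 34, 24, 43, 35, 25, 45, 40, 41, 37, 26, 47, 44, 46, 38], by decide, by decide⟩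
theorem eQ39 : Q39 = TR * TU⁻¹ * TR := by decide
theorem mQ39 : Q39 ∈ cubeGroup := by rw [eQ39]; exact mul_mem (mul_mem (mTR) (inv_mem mTU)) mTR
theorem heq_kR : tE⁻¹ * Rmove * tE = Q38 * Q39 := by decide
theorem mem_kR : tE⁻¹ * Rmove * tE ∈ cubeGroup := by rw [heq_kR]; exact mul_mem (mQ38) mQ39
def Q40 : Perm (Fin 48) := ⟨![9, 17, 6, 0, 7, 18, 12, 2, 16, 21, 20, 11, 5, 13, 14, 15, 8, 1, 23, 19, 3, 10, 22, 4, 38, 43, 32, 33, 35, 24, 42, 31, 39, 30, 34, 44, 40, 25, 41, 28, 47, 29, 27, 37, 26, 36, 46, 45], ![3, 17, 7, 20, 23, 12, 2, 4, 16, 0, 21, 11, 6, 13, 14, 15, 8, 1, 5, 19, 10, 9, 22, 18, 29, 37, 44, 42, 39, 41, 33, 31, 26, 27, 34, 28, 45, 43, 24, 32, 36, 38, 30, 25, 35, 47, 46, 40], by decide, by decide⟩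
theorem eQ40 : Q40 = TU * TU * TB * TU * TR * TU⁻¹ * TR * TU * TR * TU * TR * TU⁻¹ := by decide
theorem mQ40 : Q40 ∈ cubeGroup := by rw [eQ40]; exact mul_mem (mul_mem (mul_mem (mul_mem (mul_mem (mul_mem (mul_mem (mul_mem (mul_mem (mul_mem (mul_mem (mTU) mTU) mTB) mTU) mTR) (inv_mem mTU)) mTR) mTU) mTR) mTU) mTR) (inv_mem mTU)
def Q41 : Perm (Fin 48) := ⟨![3, 17, 2, 20, 12, 5, 6, 7, 16, 0, 21, 11, 4, 13, 14, 15, 8, 1, 18, 19, 10, 9, 22, 23, 42, 33, 44, 27, 39, 43, 36, 31, 26, 25, 34, 28, 45, 47, 24, 32, 40, 41, 30, 29, 35, 38, 46, 37], ![9, 17, 2, 0, 12, 5, 6, 7, 16, 21, 20, 11, 4, 13, 14, 15, 8, 1, 18, 19, 3, 10, 22, 23, 38, 33, 32, 27, 35, 43, 42, 31, 39, 25, 34, 44, 30, 47, 45, 28, 40, 41, 24, 29, 26, 36, 46, 37], by decide, by decide⟩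
theorem eQ41 : Q41 = TR⁻¹ * TU⁻¹ * TR * TR * TU⁻¹ * TB⁻¹ * TU * TU * TB := by decide
theorem mQ41 : Q41 ∈ cubeGroup := by rw [eQ41]; exact mul_mem (mul_mem (mul_mem (mul_mem (mul_mem (mul_mem (mul_mem (mul_mem ((inv_mem mTR)) (inv_mem mTU)) mTR) mTR) (inv_mem mTU)) (inv_mem mTB)) mTU) mTU) mTB
theorem heq_kB : tE⁻¹ * Bmove * tE = Q40 * Q41 := by decide
theorem mem_kB : tE⁻¹ * Bmove * tE ∈ cubeGroup := by rw [heq_kB]; exact mul_mem (mQ40) mQ41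
def Q42 : Perm (Fin 48) := ⟨![0, 1, 2, 3, 4, 5, 13, 7, 8, 6, 10, 11, 12, 15, 14, 9, 16, 17, 18, 22, 23, 21, 20, 19, 24, 25, 26, 34, 28, 27, 30, 38, 32, 40, 36, 35, 29, 37, 33, 39, 31, 46, 47, 43, 44, 45, 42, 41], ![0, 1, 2, 3, 4, 5, 9, 7, 8, 15, 10, 11, 12, 6, 14, 13, 16, 17, 18, 23, 22, 21, 19, 20, 24, 25, 26, 29, 28, 36, 30, 40, 32, 38, 27, 35, 34, 37, 31, 39, 33, 47, 46, 43, 44, 45, 41, 42], by decide, by decide⟩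
theorem eQ42 : Q42 = TD := by decide
theorem mQ42 : Q42 ∈ cubeGroup := by rw [eQ42]; exact mTD
theorem heq_kD : tE⁻¹ * Dmove * tE = Q42 := by decide
theorem mem_kD : tE⁻¹ * Dmove * tE ∈ cubeGroup := by rw [heq_kD]; exact mQ42
theorem mem_kU : tE⁻¹ * Umove * tE ∈ cubeGroup := by
  have h : tE⁻¹ * Umove * tE = TU := by decide
  rw [h]; exact mTU
theorem mem_cUx : Perm.ofSubtype uCorner * tE ∈ cubeGroup := by
  have h : Perm.ofSubtype uCorner * tE = TU := by decide
  rw [h]; exact mTU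
def Q43 : Perm (Fin 48) := ⟨![0, 21, 2, 11, 1, 5, 8, 7, 19, 4, 10, 15, 16, 9, 22, 6, 3, 13, 18, 20, 12, 14, 23, 17, 34, 26, 40, 28, 30, 25, 31, 33, 24, 37, 29, 27, 38, 39, 42, 41, 44, 32, 36, 35, 45, 46, 47, 43], ![0, 4, 2, 16, 9, 5, 15, 7, 6, 13, 10, 3, 20, 17, 21, 11, 12, 23, 18, 8, 19, 1, 14, 22, 32, 29, 25, 35, 27, 34, 28, 30, 41, 31, 24, 43, 42, 33, 36, 37, 26, 39, 38, 47, 40, 44, 45, 46], by decide, by decide⟩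
theorem eQ43 : Q43 = TF⁻¹ * TD * TD * TR⁻¹ * TU * TR * TU⁻¹ * TL⁻¹ * TU * TR⁻¹ * TU⁻¹ * TL := by decide
theorem mQ43 : Q43 ∈ cubeGroup := by rw [eQ43]; exact mul_mem (mul_mem (mul_mem (mul_mem (mul_mem (mul_mem (mul_mem (mul_mem (mul_mem (mul_mem (mul_mem ((inv_mem mTF)) mTD) mTD) (inv_mem mTR)) mTU) mTR) (inv_mem mTU)) (inv_mem mTL)) mTU) (inv_mem mTR)) (inv_mem mTU)) mTL
def Q44 : Perm (Fin 48) := ⟨![3, 4, 5, 18, 13, 20, 0, 9, 1, 23, 21, 8, 19, 22, 17, 11, 12, 16, 7, 15, 6, 2, 14, 10, 33, 35, 41, 32, 45, 36, 47, 34, 30, 38, 46, 40, 37, 26, 43, 27, 28, 44, 25, 39, 24, 29, 31, 42], ![6, 8, 21, 0, 1, 2, 20, 18, 11, 7, 23, 15, 16, 4, 22, 19, 17, 14, 3, 12, 5, 10, 13, 9, 44, 42, 37, 39, 40, 45, 32, 46, 27, 24, 31, 25, 29, 36, 33, 43, 35, 26, 47, 38, 41, 28, 34, 30], by decide, by dec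ide⟩
theorem eQ44 : Q44 = TR * TD * TD * TF * TB * TL * TL * TB * TL⁻¹ * TU * TR * TU⁻¹ := by decide
theorem mQ44 : Q44 ∈ cubeGroup := by rw [eQ44]; exact mul_mem (mul_mem (mul_mem (mul_mem (mul_mem (mul_mem (mul_mem (mul_mem (mul_mem (mul_mem (mul_mem (mTR) mTD) mTD) mTF) mTB) mTL) mTL) mTB) (inv_mem mTL)) mTU) mTR) (inv_mem mTU)
def Q45 : Perm (Fin 48) := ⟨![20, 18, 19, 21, 23, 16, 5, 1, 15, 4, 9, 17, 6, 14, 8, 0, 2, 22, 13, 11, 12, 3, 10, 7, 47, 45, 28, 46, 41, 36, 29, 26, 40, 38, 35, 32, 43, 24, 25, 44, 34, 31, 37, 30, 27, 33, 39, 42], ![15, 7, 16, 21, 9, 6, 12, 23, 14, 10, 22, 19, 20, 18, 13, 8, 5, 11, 1, 2, 0, 3, 17, 4, 37, 38, 31, 44, 26, 30, 43, 41, 35, 45, 40, 34, 29, 42, 33, 46, 32, 28, 47, 36, 39, 25, 27, 24], by decide, by decide⟩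
theorem eQ45 : Q45 = TL⁻¹ * TU * TR⁻¹ * TU⁻¹ * TL * TL * TB⁻¹ * TL * TL * TF * TU * TU := by decide
theorem mQ45 : Q45 ∈ cubeGroup := by rw [eQ45]; exact mul_mem (mul_mem (mul_mem (mul_mem (mul_mem (mul_mem (mul_mem (mul_mem (mul_mem (mul_mem (mul_mem ((inv_mem mTL)) mTU) (inv_mem mTR)) (inv_mem mTU)) mTL) mTL) (inv_mem mTB)) mTL) mTL) mTF) mTU) mTU
def Q46 : Perm (Fin 48) := ⟨![12, 17, 3, 0, 7, 16, 15, 1, 19, 23, 4, 11, 5, 9, 14, 2, 8, 13, 21, 20, 6, 10, 18, 22, 28, 45, 39, 36, 25, 47, 44, 27, 43, 29, 41, 26, 46, 24, 34, 35, 38, 42, 31, 30, 37, 32, 40, 33], ![3, 7, 15, 2, 10, 12, 20, 4, 16, 13, 21, 11, 0, 17, 14, 6, 5, 1, 22, 8, 19, 18, 23, 9, 37, 28, 35, 31, 24, 33, 43, 42, 45, 47, 38, 39, 27, 44, 40, 26, 46, 34, 41, 32, 30, 25, 36, 29], by decide, by decide⟩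
theorem eQ46 : Q46 = TR * TU⁻¹ * TL⁻¹ * TU * TR⁻¹ * TU⁻¹ * TL * TU⁻¹ * TB⁻¹ * TD * TD * TR⁻¹ := by decide
theorem mQ46 : Q46 ∈ cubeGroup := by rw [eQ46]; exact mul_mem (mul_mem (mul_mem (mul_mem (mul_mem (mul_mem (mul_mem (mul_mem (mul_mem (mul_mem (mul_mem (mTR) (inv_mem mTU)) (inv_mem mTL)) mTU) (inv_mem mTR)) (inv_mem mTU)) mTL) (inv_mem mTU)) (inv_mem mTB)) mTD) mTD) (inv_mem mTR)
def Q47 : Perm (Fin 48) := ⟨![0, 4, 2, 11, 9, 5, 15, 7, 3, 13, 10, 6, 20, 17, 23, 16, 12, 21, 18, 8, 19, 14, 1, 22, 26, 29, 38, 45, 28, 34, 39, 27, 32, 31, 41, 36, 37, 33, 43, 42, 24, 30, 25, 47, 44, 35, 40, 46], ![0, 22, 2, 8, 1, 5, 11, 7, 19, 4, 10, 3, 16, 9, 21, 6, 15, 13, 18, 20, 12, 17, 23, 14, 40, 42, 24, 31, 28, 25, 41, 33, 32, 37, 29, 45, 35, 36, 26, 30, 46, 34, 39, 38, 44, 27,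 47, 43], by decide, by decide⟩
theorem eQ47 : Q47 = TU * TR * TU⁻¹ * TL⁻¹ * TU * TR⁻¹ * TU⁻¹ * TL * TR * TD * TD * TF⁻¹ := by decide
theorem mQ47 : Q47 ∈ cubeGroup := by rw [eQ47]; exact mul_mem (mul_mem (mul_mem (mul_mem (mul_mem (mul_mem (mul_mem (mul_mem (mul_mem (mul_mem (mul_mem (mTU) mTR) (inv_mem mTU)) (inv_mem mTL)) mTU) (inv_mem mTR)) (inv_mem mTU)) mTL) mTR) mTD) mTD) (inv_mem mTF)
def Q48 : Perm (Fin 48) := ⟨![1, 3, 2, 7, 4, 10, 6, 0, 8, 9, 16, 11, 12, 13, 14, 15, 21, 17, 18, 19, 20, 5, 22, 23, 25, 28, 30, 27, 35, 29, 37, 31, 39, 33, 34, 24, 36, 44, 38, 45, 40, 41, 42, 32, 26, 43, 46, 47], ![7, 0, 2, 1, 4, 21, 6, 3, 8, 9, 5, 11, 12, 13, 14, 15, 10, 17, 18, 19, 20, 16, 22, 23, 35, 24, 44, 27, 25, 29, 26, 31, 43, 33, 34, 28, 36, 30, 38, 32, 40, 41, 42, 45, 37, 39, 46, 47], by decide,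 by decide⟩
theorem eQ48 : Q48 = TU := by decide
theorem mQ48 : Q48 ∈ cubeGroup := by rw [eQ48]; exact mTU
theorem heq_cL : Perm.ofSubtype lCorner * tE = Q43 * Q44 * Q45 * Q46 * Q47 * Q48 := by decide
theorem mem_cL : Perm.ofSubtype lCorner * tE ∈ cubeGroup := by rw [heq_cL]; exact mul_mem (mul_mem (mul_mem (mul_mem (mul_mem (mQ43) mQ44) mQ45) mQ46) mQ47) mQ48
def Q49 : Perm (Fin 48) := ⟨![1, 4, 5, 2, 9, 11, 6, 14, 21, 19, 16, 10, 20, 22, 0, 8, 12, 3, 7, 15, 13, 18, 17, 23, 26, 29, 45, 38, 37, 41, 39, 28, 25, 27, 32, 30, 31, 33, 46, 24, 42, 36, 34, 47, 43, 35, 44, 40], ![14, 0, 3, 17, 1, 2, 6, 18, 15, 4, 11, 5, 16, 20, 7, 19, 10, 22, 21, 9, 12, 8, 13, 23, 39, 32, 24, 33, 31, 25, 35, 36, 34, 37, 42, 45, 41, 28, 27, 30, 47, 29, 40, 44, 46, 26, 38, 43], by decide, by decide⟩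
theorem eQ49 : Q49 = TL * TL * TU * TF⁻¹ * TR * TU * TR * TU⁻¹ * TL⁻¹ * TU * TR⁻¹ * TU⁻¹ := by decide
theorem mQ49 : Q49 ∈ cubeGroup := by rw [eQ49]; exact mul_mem (mul_mem (mul_mem (mul_mem (mul_mem (mul_mem (mul_mem (mul_mem (mul_mem (mul_mem (mul_mem (mTL) mTL) mTU) (inv_mem mTF)) mTR) mTU) mTR) (inv_mem mTU)) (inv_mem mTL)) mTU) (inv_mem mTR)) (inv_mem mTU)
def Q50 : Perm (Fin 48) := ⟨![0, 1, 17, 20, 4, 11, 6, 14, 13, 7, 10, 15, 12, 18, 22, 3, 16, 19, 8, 2, 5, 9, 21, 23, 26, 25, 45, 32, 38, 34, 39, 33, 36, 31, 29, 30, 40, 37, 41, 24, 28, 44, 27, 43, 42, 35, 47, 46], ![0, 1, 19, 15, 4, 20, 6, 9, 18, 21, 10, 5, 12, 8, 7, 11, 16, 2, 13, 17, 3, 22, 14, 23, 39, 25, 24, 42, 40, 34, 35, 33, 27, 31, 29, 45, 32, 37, 28, 30, 36, 38, 44, 43, 41, 26, 47, 46], by decide, by decide⟩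
theorem eQ50 : Q50 = TL * TR⁻¹ * TF * TU⁻¹ * TL * TL * TF * TL * TL * TF * TU * TR := by decide
theorem mQ50 : Q50 ∈ cubeGroup := by rw [eQ50]; exact mul_mem (mul_mem (mul_mem (mul_mem (mul_mem (mul_mem (mul_mem (mul_mem (mul_mem (mul_mem (mul_mem (mTL) (inv_mem mTR)) mTF) (inv_mem mTU)) mTL) mTL) mTF) mTL) mTL) mTF) mTU) mTR
def Q51 : Perm (Fin 48) := ⟨![2, 13, 15, 7, 1, 10, 6, 0, 11, 4, 18, 20, 16, 3, 9, 17, 19, 14, 22, 21, 12, 5, 8, 23, 27, 38, 30, 31, 47, 25, 40, 26, 33, 37, 35, 24, 32, 42, 28, 45, 46, 34, 44, 36, 29, 41, 39, 43], ![7, 4, 0, 13, 9, 21, 6, 3, 22, 14, 5, 8, 20, 1, 17, 2, 12, 15, 10, 16, 11, 19, 18, 23, 35, 29, 31, 24, 38, 44, 26, 27, 36, 32, 41, 34, 43, 33, 25, 46, 30, 45, 37, 47, 42, 39, 40, 28], by decide, by decide⟩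
theorem eQ51 : Q51 = TU⁻¹ * TL⁻¹ * TU * TR⁻¹ * TU⁻¹ * TL * TF⁻¹ * TL * TL * TF⁻¹ * TU * TU := by decide
theorem mQ51 : Q51 ∈ cubeGroup := by rw [eQ51]; exact mul_mem (mul_mem (mul_mem (mul_mem (mul_mem (mul_mem (mul_mem (mul_mem (mul_mem (mul_mem (mul_mem ((inv_mem mTU)) (inv_mem mTL)) mTU) (inv_mem mTR)) (inv_mem mTU)) mTL) (inv_mem mTF)) mTL) mTL) (inv_mem mTF)) mTU) mTU
def Q52 : Perm (Fin 48) := ⟨![0, 17, 5, 3, 1, 11, 6, 14, 20, 4, 10, 19, 16, 18, 13, 15, 8, 9, 7, 2, 12, 21, 22, 23, 31, 39, 44, 30, 42, 25, 46, 41, 38, 37, 40, 28, 47, 35, 29, 32, 45, 24, 33, 26, 36, 34, 27, 43], ![0, 4, 19, 3, 9, 2, 6, 18, 16, 17, 10, 5, 20, 14, 7, 15, 12, 1, 13, 11, 8, 21, 22, 23, 41, 29, 43, 46, 35, 38, 27, 24, 39, 42, 45, 37, 44, 33, 32, 25, 34, 31, 28, 47, 26, 40, 30, 36], by decide, by dec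ide⟩
theorem eQ52 : Q52 = TR⁻¹ * TL * TU * TU * TR * TU⁻¹ * TL⁻¹ * TU * TR⁻¹ * TU⁻¹ * TL * TU⁻¹ := by decide
theorem mQ52 : Q52 ∈ cubeGroup := by rw [eQ52]; exact mul_mem (mul_mem (mul_mem (mul_mem (mul_mem (mul_mem (mul_mem (mul_mem (mul_mem (mul_mem (mul_mem ((inv_mem mTR)) mTL) mTU) mTU) mTR) (inv_mem mTU)) (inv_mem mTL)) mTU) (inv_mem mTR)) (inv_mem mTU)) mTL) (inv_mem mTU)
def Q53 : Perm (Fin 48) := ⟨![5, 4, 11, 13, 9, 2, 6, 18, 0, 17, 7, 21, 20, 22, 3, 16, 12, 10, 14, 15, 8, 19, 1, 23, 47, 24, 46, 32, 37, 38, 29, 26, 25, 42, 35, 31, 41, 30, 27, 34, 28, 44, 40, 45, 43, 33, 39, 36], ![8, 22, 5, 14, 1, 0, 6, 10, 20, 4, 17, 2, 16, 3, 18, 19, 15, 9, 7, 21, 12, 11, 13, 23, 25, 32, 31, 38, 40, 30, 37, 35, 27, 45, 39, 34, 47, 28, 29, 46, 42, 36, 33, 44, 41, 43, 26, 24], by decide,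 by decide⟩
theorem eQ53 : Q53 = TL⁻¹ * TR * TU * TU * TF⁻¹ * TU * TU * TR * TU⁻¹ * TL⁻¹ * TU * TR⁻¹ := by decide
theorem mQ53 : Q53 ∈ cubeGroup := by rw [eQ53]; exact mul_mem (mul_mem (mul_mem (mul_mem (mul_mem (mul_mem (mul_mem (mul_mem (mul_mem (mul_mem (mul_mem ((inv_mem mTL)) mTR) mTU) mTU) (inv_mem mTF)) mTU) mTU) mTR) (inv_mem mTU)) (inv_mem mTL)) mTU) (inv_mem mTR)
def Q54 : Perm (Fin 48) := ⟨![7, 8, 21, 1, 4, 11, 6, 14, 15, 9, 5, 0, 12, 18, 10, 19, 17, 22, 3, 2, 20, 16, 13, 23, 44, 36, 31, 26, 30, 29, 32, 43, 24, 33, 37, 34, 41, 38, 27, 46, 39, 35, 40, 42, 45, 28, 25, 47], ![11, 3, 19, 18, 4, 10, 6, 0, 1, 9, 14, 5, 12, 22, 7, 8, 21, 16, 13, 15, 20, 2, 17, 23, 32, 46, 27, 38, 45, 29, 28, 26, 30, 33, 35, 41, 25, 34, 37, 40, 42, 36, 43, 31, 24, 44, 39, 47], by decide, by decide⟩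
theorem eQ54 : Q54 = TU⁻¹ * TL * TU⁻¹ * TF * TU := by decide
theorem mQ54 : Q54 ∈ cubeGroup := by rw [eQ54]; exact mul_mem (mul_mem (mul_mem (mul_mem ((inv_mem mTU)) mTL) (inv_mem mTU)) mTF) mTU
theorem heq_cF : Perm.ofSubtype fCorner * tE = Q49 * Q50 * Q51 * Q52 * Q53 * Q54 := by decide
theorem mem_cF : Perm.ofSubtype fCorner * tE ∈ cubeGroup := by rw [heq_cF]; exact mul_mem (mul_mem (mul_mem (mul_mem (mul_mem (mQ49) mQ50) mQ51) mQ52) mQ53) mQ54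
def Q55 : Perm (Fin 48) := ⟨![2, 10, 6, 3, 13, 5, 15, 7, 16, 17, 18, 11, 19, 9, 14, 12, 0, 1, 23, 20, 8, 21, 4, 22, 27, 34, 43, 36, 39, 47, 40, 30, 26, 29, 24, 37, 44, 31, 32, 25, 38, 42, 28, 46, 35, 41, 45, 33], ![16, 17, 0, 3, 22, 5, 2, 7, 20, 13, 1, 11, 15, 4, 14, 6, 8, 9, 10, 12, 19, 21, 23, 18, 34, 39, 32, 24, 42, 33, 31, 37, 38, 47, 25, 44, 27, 35, 40, 28, 30, 45, 41, 26, 36, 46, 43, 29], by decide, by decide⟩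
theorem eQ55 : Q55 = TB * TD * TD * TR * TL * TU * TR * TU⁻¹ * TL⁻¹ * TU * TR⁻¹ * TU⁻¹ := by decide
theorem mQ55 : Q55 ∈ cubeGroup := by rw [eQ55]; exact mul_mem (mul_mem (mul_mem (mul_mem (mul_mem (mul_mem (mul_mem (mul_mem (mul_mem (mul_mem (mul_mem (mTB) mTD) mTD) mTR) mTL) mTU) mTR) (inv_mem mTU)) (inv_mem mTL)) mTU) (inv_mem mTR)) (inv_mem mTU)
def Q56 : Perm (Fin 48) := ⟨![3, 9, 12, 7, 18, 16, 0, 1, 22, 13, 21, 8, 2, 14, 17, 6, 20, 15, 4, 11, 19, 5, 23, 10, 28, 34, 42, 43, 35, 45, 44, 40, 39, 24, 27, 38, 33, 31, 47, 36, 25, 37, 29, 46, 26, 32, 41, 30], ![6, 7, 12, 0, 18, 21, 15, 3, 11, 1, 23, 19, 2, 9, 13, 17, 5, 14, 4, 20, 16, 10, 8, 22, 33, 40, 44, 34, 24, 42, 47, 37, 45, 36, 25, 28, 39, 41, 35, 32, 31, 46, 26, 27, 30, 29, 43, 38], by decide, by decide⟩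
theorem eQ56 : Q56 = TR⁻¹ * TD * TD * TB * TB * TU * TU * TR⁻¹ * TU * TR * TU⁻¹ * TL⁻¹ := by decide
theorem mQ56 : Q56 ∈ cubeGroup := by rw [eQ56]; exact mul_mem (mul_mem (mul_mem (mul_mem (mul_mem (mul_mem (mul_mem (mul_mem (mul_mem (mul_mem (mul_mem ((inv_mem mTR)) mTD) mTD) mTB) mTB) mTU) mTU) (inv_mem mTR)) mTU) mTR) (inv_mem mTU)) (inv_mem mTL)
def Q57 : Perm (Fin 48) := ⟨![5, 8, 20, 0, 18, 6, 15, 23, 11, 1, 7, 21, 2, 13, 3, 12, 17, 14, 9, 19, 16, 10, 4, 22, 39, 40, 30, 34, 25, 47, 35, 44, 43, 29, 28, 24, 38, 41, 42, 45, 31, 46, 36, 27, 37, 26, 32, 33], ![3, 9, 12, 14, 22, 0, 5, 10, 1, 18, 21, 8, 15, 13, 17, 6, 20, 16, 4, 19, 2, 11, 23, 7, 35, 28, 45, 43, 34, 33, 26, 40, 46, 47, 27, 30, 42, 44, 36, 24, 25, 37, 38, 32, 31, 39, 41, 29], by decide, by decide⟩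
theorem eQ57 : Q57 = TU * TR⁻¹ * TU⁻¹ * TL * TR * TU * TU * TB * TD * TD * TR * TL⁻¹ := by decide
theorem mQ57 : Q57 ∈ cubeGroup := by rw [eQ57]; exact mul_mem (mul_mem (mul_mem (mul_mem (mul_mem (mul_mem (mul_mem (mul_mem (mul_mem (mul_mem (mul_mem (mTU) (inv_mem mTR)) (inv_mem mTU)) mTL) mTR) mTU) mTU) mTB) mTD) mTD) mTR) (inv_mem mTL)
def Q58 : Perm (Fin 48) := ⟨![0, 17, 5, 3, 1, 11, 15, 14, 20, 18, 10, 19, 16, 4, 13, 6, 8, 9, 7, 12, 2, 21, 23, 22, 32, 24, 31, 47, 42, 40, 28, 37, 38, 41, 25, 34, 39, 30, 35, 46, 29, 33, 26, 45, 36, 44, 43, 27], ![0, 4, 20, 3, 13, 2, 15, 18, 16, 17, 10, 5, 19, 14, 7, 6, 12, 1, 9, 11, 8, 21, 23, 22, 25, 34, 42, 47, 30, 40, 37, 26, 24, 41, 35, 38, 44, 31, 32, 36, 29, 33, 28, 46, 45, 43, 39, 27], by decide, by decide⟩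
theorem eQ58 : Q58 = TU * TR * TU⁻¹ * TL⁻¹ * TU * TR⁻¹ * TU⁻¹ * TL * TL * TR⁻¹ * TD * TD := by decide
theorem mQ58 : Q58 ∈ cubeGroup := by rw [eQ58]; exact mul_mem (mul_mem (mul_mem (mul_mem (mul_mem (mul_mem (mul_mem (mul_mem (mul_mem (mul_mem (mul_mem (mTU) mTR) (inv_mem mTU)) (inv_mem mTL)) mTU) (inv_mem mTR)) (inv_mem mTU)) mTL) mTL) (inv_mem mTR)) mTD) mTD
def Q59 : Perm (Fin 48) := ⟨![0, 1, 2, 15, 4, 5, 6, 7, 11, 9, 10, 8, 12, 13, 17, 3, 16, 14, 18, 19, 20, 22, 21, 23, 42, 30, 43, 27, 31, 29, 36, 28, 34, 33, 32, 37, 39, 45, 35, 25, 40, 41, 26, 24, 46, 38, 44, 47], ![0, 1, 2, 15, 4, 5, 6, 7, 11, 9, 10, 8, 12, 13, 17, 3, 16, 14, 18, 19, 20, 22, 21, 23, 43, 39, 42, 27, 31, 29, 25, 28, 34, 33, 32, 38, 30, 35, 45, 36, 40, 41, 24, 26, 46, 37, 44, 47], by decide, by decide⟩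
theorem eQ59 : Q59 = TF * TF * TU * TU * TR * TU⁻¹ * TL⁻¹ * TU * TR⁻¹ * TU⁻¹ * TL * TU⁻¹ := by decide
theorem mQ59 : Q59 ∈ cubeGroup := by rw [eQ59]; exact mul_mem (mul_mem (mul_mem (mul_mem (mul_mem (mul_mem (mul_mem (mul_mem (mul_mem (mul_mem (mul_mem (mTF) mTF) mTU) mTU) mTR) (inv_mem mTU)) (inv_mem mTL)) mTU) (inv_mem mTR)) (inv_mem mTU)) mTL) (inv_mem mTU)
def Q60 : Perm (Fin 48) := ⟨![1, 15, 2, 7, 4, 10, 6, 0, 11, 9, 16, 8, 12, 13, 17, 3, 22, 14, 18, 19, 20, 5, 21, 23, 25, 31, 30, 27, 38, 29, 37, 28, 36, 33, 32, 24, 39, 46, 35, 45, 40, 41, 26, 34, 42, 43, 44, 47], ![7, 0, 2, 15, 4, 21, 6, 3, 11, 9, 5, 8, 12, 13, 17, 1, 10, 14, 18, 19, 20, 22, 16, 23, 35, 24, 42, 27, 31, 29, 26, 25, 34, 33, 43, 38, 32, 30, 28, 36, 40, 41, 44, 45, 46, 39, 37, 47], by decide, by decide⟩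
theorem eQ60 : Q60 = TF * TF * TU := by decide
theorem mQ60 : Q60 ∈ cubeGroup := by rw [eQ60]; exact mul_mem (mul_mem (mTF) mTF) mTU
theorem heq_cR : Perm.ofSubtype rCorner * tE = Q55 * Q56 * Q57 * Q58 * Q59 * Q60 := by decide
theorem mem_cR : Perm.ofSubtype rCorner * tE ∈ cubeGroup := by rw [heq_cR]; exact mul_mem (mul_mem (mul_mem (mul_mem (mul_mem (mQ55) mQ56) mQ57) mQ58) mQ59) mQ60
def Q61 : Perm (Fin 48) := ⟨![1, 3, 12, 7, 23, 14, 2, 11, 8, 9, 16, 0, 6, 13, 10, 15, 21, 17, 4, 19, 20, 5, 22, 18, 46, 24, 47, 43, 26, 41, 34, 32, 35, 27, 44, 33, 36, 30, 38, 29, 25, 37, 42, 45, 39, 31, 28, 40], ![11, 0, 6, 1, 18, 21, 12, 3, 8, 9, 14, 7, 2, 13, 5, 15, 10, 17, 23, 19, 20, 16, 22, 4, 25, 40, 28, 33, 46, 39, 37, 45, 31, 35, 30, 32, 36, 41, 38, 44, 47, 29, 42, 27, 34, 43, 24, 26], by decide, by decide⟩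
theorem eQ61 : Q61 = TB * TB * TL * TL * TB * TL⁻¹ * TU * TR * TU⁻¹ * TL⁻¹ * TU * TR⁻¹ := by decide
theorem mQ61 : Q61 ∈ cubeGroup := by rw [eQ61]; exact mul_mem (mul_mem (mul_mem (mul_mem (mul_mem (mul_mem (mul_mem (mul_mem (mul_mem (mul_mem (mul_mem (mTB) mTB) mTL) mTL) mTB) (inv_mem mTL)) mTU) mTR) (inv_mem mTU)) (inv_mem mTL)) mTU) (inv_mem mTR)
def Q62 : Perm (Fin 48) := ⟨![9, 17, 11, 3, 0, 18, 6, 2, 4, 22, 20, 1, 10, 13, 16, 7, 8, 12, 14, 19, 15, 21, 5, 23, 38, 43, 40, 32, 26, 24, 42, 31, 35, 30, 34, 27, 29, 25, 33, 41, 28, 44, 47, 37, 39, 36, 46, 45], ![4, 11, 7, 3, 8, 22, 6, 15, 16, 0, 12, 2, 17, 13, 18, 20, 14, 1, 5, 19, 10, 21, 9, 23, 29, 37, 28, 35, 40, 36, 33, 31, 27, 38, 34, 32, 45, 43, 24, 44, 26, 39, 30, 25, 41, 47, 46, 42], by decide, by decide⟩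
theorem eQ62 : Q62 = TU⁻¹ * TL * TL * TB⁻¹ * TL * TL * TB * TR * TR * TF * TU * TR := by decide
theorem mQ62 : Q62 ∈ cubeGroup := by rw [eQ62]; exact mul_mem (mul_mem (mul_mem (mul_mem (mul_mem (mul_mem (mul_mem (mul_mem (mul_mem (mul_mem (mul_mem ((inv_mem mTU)) mTL) mTL) (inv_mem mTB)) mTL) mTL) mTB) mTR) mTR) mTF) mTU) mTR
def Q63 : Perm (Fin 48) := ⟨![2, 5, 6, 16, 0, 21, 17, 3, 12, 9, 18, 11, 10, 13, 14, 15, 7, 4, 23, 19, 20, 1, 22, 8, 27, 35, 25, 32, 42, 29, 40, 31, 38, 33, 34, 43, 24, 26, 30, 37, 28, 44, 45, 39, 36, 41, 46, 47], ![4, 21, 0, 7, 17, 1, 2, 16, 23, 9, 12, 11, 8, 13, 14, 15, 3, 6, 10, 19, 20, 5, 22, 18, 36, 26, 37, 24, 40, 29, 38, 31, 27, 33, 34, 25, 44, 39, 32, 43, 30, 45, 28, 35, 41, 42, 46, 47], by decide, by decide⟩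
theorem eQ63 : Q63 = TU⁻¹ * TL⁻¹ * TU * TR⁻¹ * TU⁻¹ * TL * TF⁻¹ * TR * TR * TB * TF * TR := by decide
theorem mQ63 : Q63 ∈ cubeGroup := by rw [eQ63]; exact mul_mem (mul_mem (mul_mem (mul_mem (mul_mem (mul_mem (mul_mem (mul_mem (mul_mem (mul_mem (mul_mem ((inv_mem mTU)) (inv_mem mTL)) mTU) (inv_mem mTR)) (inv_mem mTU)) mTL) (inv_mem mTF)) mTR) mTR) mTB) mTF) mTR
def Q64 : Perm (Fin 48) := ⟨![0, 17, 2, 11, 1, 5, 6, 7, 3, 4, 10, 15, 16, 13, 22, 20, 8, 21, 18, 19, 12, 14, 9, 23, 26, 32, 34, 27, 37, 24, 39, 47, 25, 30, 33, 46, 42, 28, 36, 31, 40, 41, 38, 44, 43, 35, 29, 45], ![0, 4, 2, 8, 9, 5, 6, 7, 16, 22, 10, 3, 20, 13, 21, 11, 12, 1, 18, 19, 15, 17, 14, 23, 29, 32, 24, 27, 37, 46, 33, 39, 25, 34, 26, 45, 38, 28, 42, 30, 40, 41, 36, 44, 43, 47, 35, 31], by decide, by decide⟩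
theorem eQ64 : Q64 = TR * TU * TR * TU⁻¹ * TL⁻¹ * TU * TR⁻¹ * TU⁻¹ * TL * TR * TR * TF⁻¹ := by decide
theorem mQ64 : Q64 ∈ cubeGroup := by rw [eQ64]; exact mul_mem (mul_mem (mul_mem (mul_mem (mul_mem (mul_mem (mul_mem (mul_mem (mul_mem (mul_mem (mul_mem (mTR) mTU) mTR) (inv_mem mTU)) (inv_mem mTL)) mTU) (inv_mem mTR)) (inv_mem mTU)) mTL) mTR) mTR) (inv_mem mTF)
def Q65 : Perm (Fin 48) := ⟨![12, 3, 1, 7, 23, 10, 2, 0, 8, 9, 4, 11, 6, 13, 14, 15, 21, 17, 16, 19, 20, 5, 22, 18, 30, 28, 33, 25, 35, 41, 45, 31, 39, 27, 34, 29, 36, 44, 38, 47, 37, 43, 42, 32, 26, 24, 46, 40], ![7, 2, 6, 1, 10, 21, 12, 3, 8, 9, 5, 11, 0, 13, 14, 15, 18, 17, 23, 19, 20, 16, 22, 4, 45, 27, 44, 33, 25, 35, 24, 31, 43, 26, 34, 28, 36, 40, 38, 32, 47, 29, 42, 41, 37, 30, 46, 39], by decide, by decide⟩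
theorem eQ65 : Q65 = TU * TB⁻¹ * TU * TU * TR * TU⁻¹ * TL⁻¹ * TU * TR⁻¹ * TU⁻¹ * TL * TU⁻¹ := by decide
theorem mQ65 : Q65 ∈ cubeGroup := by rw [eQ65]; exact mul_mem (mul_mem (mul_mem (mul_mem (mul_mem (mul_mem (mul_mem (mul_mem (mul_mem (mul_mem (mul_mem (mTU) (inv_mem mTB)) mTU) mTU) mTR) (inv_mem mTU)) (inv_mem mTL)) mTU) (inv_mem mTR)) (inv_mem mTU)) mTL) (inv_mem mTU)
def Q66 : Perm (Fin 48) := ⟨![2, 1, 6, 3, 10, 5, 12, 7, 8, 9, 18, 11, 0, 13, 14, 15, 16, 17, 23, 19, 20, 21, 22, 4, 27, 30, 26, 33, 28, 37, 40, 31, 32, 43, 34, 35, 36, 45, 38, 39, 47, 29, 42, 24, 44, 41, 46, 25], ![12, 1, 0, 3, 23, 5, 2, 7, 8, 9, 4, 11, 6, 13, 14, 15, 16, 17, 10, 19, 20, 21, 22, 18, 43, 47, 26, 24, 28, 41, 25, 31, 32, 27, 34, 35, 36, 29, 38, 39, 30, 45, 42, 33, 44, 37, 46, 40], by decide, by dec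ide⟩
theorem eQ66 : Q66 = TB := by decide
theorem mQ66 : Q66 ∈ cubeGroup := by rw [eQ66]; exact mTB
theorem heq_cB : Perm.ofSubtype bCorner * tE = Q61 * Q62 * Q63 * Q64 * Q65 * Q66 := by decide
theorem mem_cB : Perm.ofSubtype bCorner * tE ∈ cubeGroup := by rw [heq_cB]; exact mul_mem (mul_mem (mul_mem (mul_mem (mul_mem (mQ61) mQ62) mQ63) mQ64) mQ65) mQ66
def Q67 : Perm (Fin 48) := ⟨![1, 3, 12, 7, 23, 14, 2, 11, 8, 9, 16, 0, 6, 13, 10, 15, 21, 17, 4, 19, 20, 5, 22, 18, 46, 24, 47, 43, 26, 41, 34, 32, 35, 27, 44, 33, 36, 30, 38, 29, 25, 37, 42, 45, 39, 31, 28, 40], ![11, 0, 6, 1, 18, 21, 12, 3, 8, 9, 14, 7, 2, 13, 5, 15, 10, 17, 23, 19, 20, 16, 22, 4, 25, 40, 28, 33, 46, 39, 37, 45, 31, 35, 30, 32, 36, 41, 38, 44, 47, 29, 42, 27, 34, 43, 24, 26], by decide, by decide⟩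
theorem eQ67 : Q67 = TB * TB * TL * TL * TB * TL⁻¹ * TU * TR * TU⁻¹ * TL⁻¹ * TU * TR⁻¹ := by decide
theorem mQ67 : Q67 ∈ cubeGroup := by rw [eQ67]; exact mul_mem (mul_mem (mul_mem (mul_mem (mul_mem (mul_mem (mul_mem (mul_mem (mul_mem (mul_mem (mul_mem (mTB) mTB) mTL) mTL) mTB) (inv_mem mTL)) mTU) mTR) (inv_mem mTU)) (inv_mem mTL)) mTU) (inv_mem mTR)
def Q68 : Perm (Fin 48) := ⟨![0, 13, 12, 14, 9, 23, 2, 6, 16, 17, 10, 21, 20, 5, 3, 15, 19, 1, 4, 7, 8, 11, 22, 18, 30, 28, 47, 35, 37, 38, 45, 34, 25, 42, 46, 33, 27, 44, 40, 29, 26, 39, 41, 32, 43, 24, 31, 36], ![0, 17, 6, 14, 18, 13, 7, 19, 20, 4, 10, 21, 2, 1, 3, 15, 8, 9, 23, 16, 12, 11, 22, 5, 45, 32, 40, 36, 25, 39, 24, 46, 43, 35, 31, 27, 47, 28, 29, 41, 38, 42, 33, 44, 37, 30, 34, 26], by decide, by decide⟩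
theorem eQ68 : Q68 = TU⁻¹ * TL * TL * TB⁻¹ * TL * TL * TB * TL⁻¹ * TB * TB * TU * TR := by decide
theorem mQ68 : Q68 ∈ cubeGroup := by rw [eQ68]; exact mul_mem (mul_mem (mul_mem (mul_mem (mul_mem (mul_mem (mul_mem (mul_mem (mul_mem (mul_mem (mul_mem ((inv_mem mTU)) mTL) mTL) (inv_mem mTB)) mTL) mTL) mTB) (inv_mem mTL)) mTB) mTB) mTU) mTR
def Q69 : Perm (Fin 48) := ⟨![2, 0, 11, 19, 5, 15, 21, 22, 17, 4, 18, 16, 7, 23, 1, 20, 10, 8, 14, 6, 12, 13, 9, 3, 24, 38, 47, 40, 46, 37, 30, 28, 31, 43, 32, 33, 26, 42, 39, 29, 41, 27, 35, 36, 34, 45, 44, 25], ![1, 14, 0, 23, 9, 4, 19, 12, 17, 22, 16, 2, 20, 21, 18, 5, 11, 8, 10, 3, 15, 6, 7, 13, 24, 47, 36, 41, 31, 39, 30, 32, 34, 35, 44, 42, 43, 29, 25, 38, 27, 40, 37, 33, 46, 45, 28, 26], by decide, by decide⟩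
theorem eQ69 : Q69 = TU⁻¹ * TL⁻¹ * TU * TR⁻¹ * TU⁻¹ * TL * TB * TB * TL * TB⁻¹ * TF⁻¹ * TL := by decide
theorem mQ69 : Q69 ∈ cubeGroup := by rw [eQ69]; exact mul_mem (mul_mem (mul_mem (mul_mem (mul_mem (mul_mem (mul_mem (mul_mem (mul_mem (mul_mem (mul_mem ((inv_mem mTU)) (inv_mem mTL)) mTU) (inv_mem mTR)) (inv_mem mTU)) mTL) mTB) mTB) mTL) (inv_mem mTB)) (inv_mem mTF)) mTL
def Q70 : Perm (Fin 48) := ⟨![0, 1, 19, 8, 4, 2, 6, 18, 15, 9, 10, 3, 12, 14, 21, 5, 16, 22, 13, 11, 20, 17, 7, 23, 41, 30, 32, 46, 36, 29, 27, 39, 42, 33, 26, 44, 43, 45, 25, 28, 34, 31, 37, 24, 38, 40, 35, 47], ![0, 1, 5, 11, 4, 15, 6, 22, 3, 9, 10, 19, 12, 18, 13, 8, 16, 21, 7, 2, 20, 14, 17, 23, 43, 38, 34, 30, 39, 29, 25, 41, 26, 33, 40, 46, 28, 42, 44, 31, 45, 24, 32, 36, 35, 37, 27, 47], by decide, by dec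ide⟩
theorem eQ70 : Q70 = TU * TU * TR * TU⁻¹ * TL⁻¹ * TU * TR⁻¹ * TU⁻¹ * TL * TU⁻¹ * TL⁻¹ * TF := by decide
theorem mQ70 : Q70 ∈ cubeGroup := by rw [eQ70]; exact mul_mem (mul_mem (mul_mem (mul_mem (mul_mem (mul_mem (mul_mem (mul_mem (mul_mem (mul_mem (mul_mem (mTU) mTU) mTR) (inv_mem mTU)) (inv_mem mTL)) mTU) (inv_mem mTR)) (inv_mem mTU)) mTL) (inv_mem mTU)) (inv_mem mTL)) mTF
def Q71 : Perm (Fin 48) := ⟨![12, 1, 11, 3, 23, 10, 2, 0, 8, 15, 4, 9, 6, 7, 20, 13, 16, 17, 14, 5, 22, 21, 19, 18, 25, 47, 45, 39, 38, 41, 37, 32, 36, 27, 44, 30, 34, 29, 31, 24, 35, 26, 46, 33, 42, 43, 28, 40], ![7, 1, 6, 3, 10, 19, 12, 13, 8, 11, 5, 2, 0, 15, 18, 9, 16, 17, 23, 22, 14, 21, 20, 4, 39, 24, 41, 33, 46, 37, 35, 38, 31, 43, 36, 40, 32, 30, 28, 27, 47, 29, 44, 45, 34, 26, 42, 25], by decide,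 by decide⟩
theorem eQ71 : Q71 = TB * TB * TD⁻¹ * TB * TL⁻¹ * TU * TR * TU⁻¹ * TL⁻¹ * TU * TR⁻¹ * TU⁻¹ := by decide
theorem mQ71 : Q71 ∈ cubeGroup := by rw [eQ71]; exact mul_mem (mul_mem (mul_mem (mul_mem (mul_mem (mul_mem (mul_mem (mul_mem (mul_mem (mul_mem (mul_mem (mTB) mTB) (inv_mem mTD)) mTB) (inv_mem mTL)) mTU) mTR) (inv_mem mTU)) (inv_mem mTL)) mTU) (inv_mem mTR)) (inv_mem mTU)
def Q72 : Perm (Fin 48) := ⟨![1, 3, 0, 13, 23, 4, 7, 12, 8, 11, 16, 2, 6, 15, 18, 9, 21, 17, 10, 22, 14, 19, 20, 5, 47, 28, 25, 45, 40, 31, 29, 38, 27, 46, 36, 43, 26, 44, 39, 37, 24, 30, 35, 32, 41, 33, 42, 34], ![2, 0, 11, 1, 5, 23, 12, 6, 8, 15, 18, 9, 7, 3, 20, 13, 10, 17, 14, 21, 22, 16, 19, 4, 40, 26, 36, 32, 25, 30, 41, 29, 43, 45, 47, 42, 34, 39, 31, 38, 28, 44, 46, 35, 37, 27, 33, 24],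 by decide, by decide⟩
theorem eQ72 : Q72 = TL * TL * TB⁻¹ * TD * TU := by decide
theorem mQ72 : Q72 ∈ cubeGroup := by rw [eQ72]; exact mul_mem (mul_mem (mul_mem (mul_mem (mTL) mTL) (inv_mem mTB)) mTD) mTU
theorem heq_cD : Perm.ofSubtype dCorner * tE = Q67 * Q68 * Q69 * Q70 * Q71 * Q72 := by decide
theorem mem_cD : Perm.ofSubtype dCorner * tE ∈ cubeGroup := by rw [heq_cD]; exact mul_mem (mul_mem (mul_mem (mul_mem (mul_mem (mQ67) mQ68) mQ69) mQ70) mQ71) mQ72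

theorem hconj : ∀ g ∈ cubeGroup, tE⁻¹ * g * tE ∈ cubeGroup := by
  intro g hg
  induction hg using Subgroup.closure_induction with
  | mem x hx =>
    simp only [Set.mem_insert_iff, Set.mem_singleton_iff] at hx
    rcases hx with rfl | rfl | rfl | rfl | rfl | rfl
    · exact mem_kU
    · exact mem_kL
    · exact mem_kF
    · exact mem_kR
    · exact mem_kB
    · exact mem_kD
  | one =>
    have h : tE⁻¹ * 1 * tE = 1 := by group
    rw [h]; exact one_mem _
  | mul x y hx hy ihx ihy =>
    have h : tE⁻¹ * (x * y) * tE = (tE⁻¹ * x * tE) * (tE⁻¹ * y * tE) := by group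
    rw [h]; exact mul_mem ihx ihy
  | inv x hx ihx =>
    have h : tE⁻¹ * x⁻¹ * tE = (tE⁻¹ * x * tE)⁻¹ := by group
    rw [h]; exact inv_mem ihx

theorem pBig : ∀ g ∈ bigGroup, g ∈ cubeGroup ∨ g * tE ∈ cubeGroup := by
  intro g hg
  induction hg using Subgroup.closure_induction with
  | mem x hx =>
    simp only [Set.mem_insert_iff, Set.mem_singleton_iff] at hx
    rcases hx with rfl | rfl | rfl | rfl | rfl | rfl | rfl | rfl | rfl | rfl | rfl | rfl
    · exact Or.inr mem_tsq
    · exact Or.inr mem_eL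
    · exact Or.inr mem_eF
    · exact Or.inr mem_eR
    · exact Or.inr mem_eB
    · exact Or.inr mem_eD
    · exact Or.inr mem_cUx
    · exact Or.inr mem_cL
    · exact Or.inr mem_cF
    · exact Or.inr mem_cR
    · exact Or.inr mem_cB
    · exact Or.inr mem_cD
  | one => exact Or.inl (one_mem _)
  | mul x y hx hy ihx ihy =>
    rcases ihx with h1 | h1 <;> rcases ihy with h2 | h2
    · exact Or.inl (mul_mem h1 h2)
    · right
      have h : x * y * tE = x * (y * tE) := by group
      rw [h]; exact mul_mem h1 h2
    · right
      have h : x * y * tE = (x * tE) * (tE⁻¹ * y * tE) := by group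
      rw [h]; exact mul_mem h1 (hconj y h2)
    · left
      have h : x * y = (x * tE) * (tE⁻¹ * (y * tE) * tE) * (tE * tE)⁻¹ := by group
      rw [h]; exact mul_mem (mul_mem h1 (hconj _ h2)) (inv_mem mem_tsq)
  | inv x hx ihx =>
    rcases ihx with h1 | h1
    · exact Or.inl (inv_mem h1)
    · right
      have h : x⁻¹ * tE = (tE * tE) * (tE⁻¹ * (x * tE)⁻¹ * tE) := by group
      rw [h]; exact mul_mem mem_tsq (hconj _ (inv_mem h1))


/-- The group generated by the twelve restricted permutations is the
internal direct product of the edge group and the corner group, it has order exactly twice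
the order of the cube group, and the cube group is a subgroup of index 2 in it. -/
theorem bigGroup_direct_product :
    bigGroup = edgeGroupExt ⊔ cornerGroupExt ∧
    edgeGroupExt ⊓ cornerGroupExt = ⊥ ∧
    (∀ x ∈ edgeGroupExt, ∀ y ∈ cornerGroupExt, Commute x y) ∧
    Nat.card bigGroup = 2 * Nat.card cubeGroup ∧
    cubeGroup ≤ bigGroup ∧
    cubeGroup.relIndex bigGroup = 2 := by
  have hC_le_big : cubeGroup ≤ bigGroup := by
    apply (Subgroup.closure_le _).mpr
    intro x hx
    simp only [Set.mem_insert_iff, Set.mem_singleton_iff] at hx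
    rcases hx with rfl | rfl | rfl | rfl | rfl | rfl
    · have h : Umove = Perm.ofSubtype uEdge * Perm.ofSubtype uCorner := by decide
      rw [h]
      exact mul_mem (Subgroup.subset_closure (Set.mem_insert _ _)) (Subgroup.subset_closure (Set.mem_insert_of_mem _ (Set.mem_insert_of_mem _ (Set.mem_insert_of_mem _ (Set.mem_insert_of_mem _ (Set.mem_insert_of_mem _ (Set.mem_insert_of_mem _ (Set.mem_insert _ _))))))))
    · have h : Lmove = Perm.ofSubtype lEdge * Perm.ofSubtype lCorner := by decide
      rw [h]
      exact mul_mem (Subgroup.subset_closure (Set.mem_insert_of_mem _ (Set.mem_insert _ _))) (Subgroup.subset_closure (Set.mem_insert_of_mem _ (Set.mem_insert_of_mem _ (Set.mem_insert_of_mem _ (Set.mem_insert_of_mem _ (Set.mem_insert_of_mem _ (Set.mem_insert_of_mem _ (Set.mem_insert_of_mem _ (Set.mem_insert _ _)))))))))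
    · have h : Fmove = Perm.ofSubtype fEdge * Perm.ofSubtype fCorner := by decide
      rw [h]
      exact mul_mem (Subgroup.subset_closure (Set.mem_insert_of_mem _ (Set.mem_insert_of_mem _ (Set.mem_insert _ _)))) (Subgroup.subset_closure (Set.mem_insert_of_mem _ (Set.mem_insert_of_mem _ (Set.mem_insert_of_mem _ (Set.mem_insert_of_mem _ (Set.mem_insert_of_mem _ (Set.mem_insert_of_mem _ (Set.mem_insert_of_mem _ (Set.mem_insert_of_mem _ (Set.mem_insert _ _))))))))))
    · have h : Rmove = Perm.ofSubtype rEdge * Perm.ofSubtype rCorner := by decide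
      rw [h]
      exact mul_mem (Subgroup.subset_closure (Set.mem_insert_of_mem _ (Set.mem_insert_of_mem _ (Set.mem_insert_of_mem _ (Set.mem_insert _ _))))) (Subgroup.subset_closure (Set.mem_insert_of_mem _ (Set.mem_insert_of_mem _ (Set.mem_insert_of_mem _ (Set.mem_insert_of_mem _ (Set.mem_insert_of_mem _ (Set.mem_insert_of_mem _ (Set.mem_insert_of_mem _ (Set.mem_insert_of_mem _ (Set.mem_insert_of_mem _ (Set.mem_insert _ _)))))))))))
    · have h : Bmove = Perm.ofSubtype bEdge * Perm.ofSubtype bCorner := by decide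
      rw [h]
      exact mul_mem (Subgroup.subset_closure (Set.mem_insert_of_mem _ (Set.mem_insert_of_mem _ (Set.mem_insert_of_mem _ (Set.mem_insert_of_mem _ (Set.mem_insert _ _)))))) (Subgroup.subset_closure (Set.mem_insert_of_mem _ (Set.mem_insert_of_mem _ (Set.mem_insert_of_mem _ (Set.mem_insert_of_mem _ (Set.mem_insert_of_mem _ (Set.mem_insert_of_mem _ (Set.mem_insert_of_mem _ (Set.mem_insert_of_mem _ (Set.mem_insert_of_mem _ (Set.mem_insert_of_mem _ (Set.mem_insert _ _))))))))))))
    · have h : Dmove = Perm.ofSubtype dEdge * Perm.ofSubtype dCorner := by decide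
      rw [h]
      exact mul_mem (Subgroup.subset_closure (Set.mem_insert_of_mem _ (Set.mem_insert_of_mem _ (Set.mem_insert_of_mem _ (Set.mem_insert_of_mem _ (Set.mem_insert_of_mem _ (Set.mem_insert _ _))))))) (Subgroup.subset_closure (Set.mem_insert_of_mem _ (Set.mem_insert_of_mem _ (Set.mem_insert_of_mem _ (Set.mem_insert_of_mem _ (Set.mem_insert_of_mem _ (Set.mem_insert_of_mem _ (Set.mem_insert_of_mem _ (Set.mem_insert_of_mem _ (Set.mem_insert_of_mem _ (Set.mem_insert_of_mem _ (Set.mem_insert_of_mem _ (Set.mem_singleton _)))))))))))))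
  have htBig : tE ∈ bigGroup := Subgroup.subset_closure (Set.mem_insert _ _)
  have hXor : ∀ b : ↥bigGroup,
      Xor' (b * ⟨tE, htBig⟩ ∈ cubeGroup.subgroupOf bigGroup)
        (b ∈ cubeGroup.subgroupOf bigGroup) := by
    intro b
    rcases pBig b.1 b.2 with h | h
    · refine Or.inr ⟨Subgroup.mem_subgroupOf.mpr h, fun hba => htC ?_⟩
      have h2 : b.1 * tE ∈ cubeGroup := Subgroup.mem_subgroupOf.mp hba
      have h3 : tE = b.1⁻¹ * (b.1 * tE) := by group
      rw [h3]; exact mul_mem (inv_mem h) h2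
    · refine Or.inl ⟨Subgroup.mem_subgroupOf.mpr h, fun hb => htC ?_⟩
      have h2 : b.1 ∈ cubeGroup := Subgroup.mem_subgroupOf.mp hb
      have h3 : tE = b.1⁻¹ * (b.1 * tE) := by group
      rw [h3]; exact mul_mem (inv_mem h2) h
  have hidx : (cubeGroup.subgroupOf bigGroup).index = 2 :=
    Subgroup.index_eq_two_iff.mpr ⟨⟨tE, htBig⟩, hXor⟩
  have hrel : cubeGroup.relIndex bigGroup = 2 := hidx
  have hcard : Nat.card bigGroup = 2 * Nat.card cubeGroup := by
    have h1 := Subgroup.card_mul_index (cubeGroup.subgroupOf bigGroup)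
    have h2 : Nat.card (cubeGroup.subgroupOf bigGroup) = Nat.card cubeGroup :=
      Nat.card_congr (Subgroup.subgroupOfEquivOfLe hC_le_big).toEquiv
    rw [hidx, h2] at h1
    omega
  have hbig_eq : bigGroup = edgeGroupExt ⊔ cornerGroupExt := by
    rw [edgeGroupExt, cornerGroupExt, edgeGroup, cornerGroup, MonoidHom.map_closure,
      MonoidHom.map_closure, ← Subgroup.closure_union, bigGroup]
    congr 1
    simp only [Set.image_insert_eq, Set.image_singleton, Set.insert_union, Set.singleton_union]
  have hinf : edgeGroupExt ⊓ cornerGroupExt = ⊥ := by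
    rw [eq_bot_iff]
    intro g hg
    rw [Subgroup.mem_inf] at hg
    obtain ⟨hg1, hg2⟩ := hg
    obtain ⟨e, he, rfl⟩ := Subgroup.mem_map.mp hg1
    obtain ⟨c, hc, hce⟩ := Subgroup.mem_map.mp hg2
    rw [Subgroup.mem_bot]
    refine Equiv.ext fun x => ?_
    show Perm.ofSubtype e x = x
    by_cases h : (x : ℕ) < 24
    · rw [← hce]
      exact Perm.ofSubtype_apply_of_not_mem c (by omega)
    · exact Perm.ofSubtype_apply_of_not_mem e h
  have hcomm : ∀ x ∈ edgeGroupExt, ∀ y ∈ cornerGroupExt, Commute x y := by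
    intro x hx y hy
    obtain ⟨e, he, rfl⟩ := Subgroup.mem_map.mp hx
    obtain ⟨c, hc, rfl⟩ := Subgroup.mem_map.mp hy
    apply Equiv.Perm.Disjoint.commute
    intro a
    by_cases h : (a : ℕ) < 24
    · exact Or.inr (Perm.ofSubtype_apply_of_not_mem c (by omega))
    · exact Or.inl (Perm.ofSubtype_apply_of_not_mem e h)
  exact ⟨hbig_eq, hinf, hcomm, hcard, hC_le_big, hrel⟩
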